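/- Let P₄(S²) = ker π₄ and let Z be the center of P₄(S²). The group homomorphism from FreeGroup (Fin 2) to the quotient group P₄(S²) ⧸ Z determined by sending the two free generators to the classes of δ₁² and δ₂² is an isomorphism; in particular, P₄(S²)/Z(P₄(S²)) is a free group of rank 2. -/

import Mathlib

/-- The relators of the sphere braid group `B₄(S²)`: the two braid relations, the
commutation relation, and the sphere relation `δ₁δ₂δ₃δ₃δ₂δ₁ = 1`. -/
def sphereBraidRel4 : Set (FreeGroup (Fin 3)) :=
  {FreeGroup.of 0 * FreeGroup.of 1 * FreeGroup.of 0 *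
      (FreeGroup.of 1 * FreeGroup.of 0 * FreeGroup.of 1)⁻¹,
   FreeGroup.of 1 * FreeGroup.of 2 * FreeGroup.of 1 *
      (FreeGroup.of 2 * FreeGroup.of 1 * FreeGroup.of 2)⁻¹,
   FreeGroup.of 0 * FreeGroup.of 2 * (FreeGroup.of 2 * FreeGroup.of 0)⁻¹,
   FreeGroup.of 0 * FreeGroup.of 1 * FreeGroup.of 2 *
      FreeGroup.of 2 * FreeGroup.of 1 * FreeGroup.of 0}

/-- The sphere braid group `B₄(S²)` on 4 strands. -/
abbrev SphereBraidGroup4 : Type := PresentedGroup sphereBraidRel4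

/-- The standard generators `δ₁, δ₂, δ₃` of `B₄(S²)` (indexed by `0, 1, 2`). -/
def δ (i : Fin 3) : SphereBraidGroup4 := PresentedGroup.of i

/-- The adjacent transpositions in `S₄`. -/
def spherePermGen : Fin 3 → Equiv.Perm (Fin 4) := ![Equiv.swap 0 1, Equiv.swap 1 2, Equiv.swap 2 3]

lemma spherePermGen_rel : ∀ r ∈ sphereBraidRel4, FreeGroup.lift spherePermGen r = 1 := by
  intro r hr
  rcases hr with hr | hr | hr | hr <;>
    (subst hr; simp only [map_mul, map_inv, FreeGroup.lift_apply_of]; decide)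

/-- The projection `π₄ : B₄(S²) → S₄` sending `δᵢ` to the transposition `(i-1, i)`. -/
def πB4S2 : SphereBraidGroup4 →* Equiv.Perm (Fin 4) := PresentedGroup.toGroup spherePermGen_rel

lemma δ0_sq_mem_ker : (δ 0) ^ 2 ∈ πB4S2.ker := by
  rw [MonoidHom.mem_ker]
  simp only [δ, πB4S2, map_pow, PresentedGroup.toGroup.of]
  decide

lemma δ1_sq_mem_ker : (δ 1) ^ 2 ∈ πB4S2.ker := by
  rw [MonoidHom.mem_ker]
  simp only [δ, πB4S2, map_pow, PresentedGroup.toGroup.of]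
  decide

/-- The class of `δ₁²` in `P₄(S²)/Z(P₄(S²))`. -/
def e₁ : πB4S2.ker ⧸ Subgroup.center πB4S2.ker :=
  QuotientGroup.mk ⟨(δ 0) ^ 2, δ0_sq_mem_ker⟩

/-- The class of `δ₂²` in `P₄(S²)/Z(P₄(S²))`. -/
def e₂ : πB4S2.ker ⧸ Subgroup.center πB4S2.ker :=
  QuotientGroup.mk ⟨(δ 1) ^ 2, δ1_sq_mem_ker⟩

namespace SB4

def x : SphereBraidGroup4 := δ 0
def y : SphereBraidGroup4 := δ 1
def z : SphereBraidGroup4 := δ 2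

lemma rel_of_mem {r : FreeGroup (Fin 3)} (h : r ∈ sphereBraidRel4) :
    PresentedGroup.mk sphereBraidRel4 r = 1 := by
  have : r ∈ Subgroup.normalClosure sphereBraidRel4 := Subgroup.subset_normalClosure h
  exact (QuotientGroup.eq_one_iff r).mpr this

lemma rel1 : x * y * x = y * x * y := by
  have h := rel_of_mem (show _ ∈ sphereBraidRel4 from Or.inl rfl)
  simp only [map_mul, map_inv] at h
  have := mul_eq_one_iff_eq_inv.mp h
  simpa [x, y, δ, PresentedGroup.of, inv_inv] using this

lemma rel2 : y * z * y = z * y * z := by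
  have h := rel_of_mem (show _ ∈ sphereBraidRel4 from Or.inr (Or.inl rfl))
  simp only [map_mul, map_inv] at h
  have := mul_eq_one_iff_eq_inv.mp h
  simpa [y, z, δ, PresentedGroup.of, inv_inv] using this

lemma rel3 : x * z = z * x := by
  have h := rel_of_mem (show _ ∈ sphereBraidRel4 from Or.inr (Or.inr (Or.inl rfl)))
  simp only [map_mul, map_inv] at h
  have := mul_eq_one_iff_eq_inv.mp h
  simpa [x, z, δ, PresentedGroup.of, inv_inv] using this

lemma rel4 : x * y * z * z * y * x = 1 := by
  have h := rel_of_mem (show _ ∈ sphereBraidRel4 from Or.inr (Or.inr (Or.inr rfl)))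
  simp only [map_mul, map_inv] at h
  simpa [x, y, z, δ, PresentedGroup.of] using h

/-- `a = δ₁²` -/
def a : SphereBraidGroup4 := x * x
/-- `b = δ₂²` -/
def b : SphereBraidGroup4 := y * y
/-- the central element -/
def C : SphereBraidGroup4 := x * x * y * x * x * y

lemma hz2 : z * z = y⁻¹ * x⁻¹ * x⁻¹ * y⁻¹ := by
  have h := rel4
  rw [show (1 : SphereBraidGroup4) = (x*y) * ((x*y)⁻¹ * (y*x)⁻¹) * (y*x) by group] at h
  -- x*y*(z*z)*(y*x) = x*y*((x*y)⁻¹*(y*x)⁻¹)*(y*x)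
  have h2 : x*y*(z*z)*(y*x) = x*y*((x*y)⁻¹*(y*x)⁻¹)*(y*x) := by
    calc x*y*(z*z)*(y*x) = x * y * z * z * y * x := by group
    _ = (x*y) * ((x*y)⁻¹ * (y*x)⁻¹) * (y*x) := h
  have := mul_left_cancel (mul_right_cancel h2)
  rw [this]; group

lemma hzz_inv : (z * z)⁻¹ = y * x * x * y := by
  rw [hz2]; simp [mul_inv_rev, mul_assoc]

lemma czy : z * y * z⁻¹ = y⁻¹ * z * y := by
  have h : z * y * z⁻¹ = y⁻¹ * (y * z * y) * z⁻¹ := by group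
  rw [h, rel2]; group

lemma czy' : z⁻¹ * y * z = y * z * y⁻¹ := by
  calc z⁻¹ * y * z = z⁻¹ * (y * z * y) * y⁻¹ := by group
  _ = z⁻¹ * (z * y * z) * y⁻¹ := by rw [rel2]
  _ = y * z * y⁻¹ := by group

lemma cxy : x * y * x⁻¹ = y⁻¹ * x * y := by
  have h : x * y * x⁻¹ = y⁻¹ * (y * x * y) * x⁻¹ := by group
  rw [h, ← rel1]; group

lemma cxy' : x⁻¹ * y * x = y * x * y⁻¹ := by
  calc x⁻¹ * y * x = x⁻¹ * (y * x * y) * y⁻¹ := by group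
  _ = x⁻¹ * (x * y * x) * y⁻¹ := by rw [← rel1]
  _ = y * x * y⁻¹ := by group

lemma k1 : x * z⁻¹ = z⁻¹ * x := by
  calc x * z⁻¹ = z⁻¹ * (z * x) * z⁻¹ := by group
  _ = z⁻¹ * (x * z) * z⁻¹ := by rw [rel3]
  _ = z⁻¹ * x := by group

lemma hC : C = x * x * (z * z)⁻¹ := by
  rw [hzz_inv]; show x*x*y*x*x*y = x * x * (y * x * x * y); group

lemma hCx : C * x = x * C := by
  rw [hC]
  calc x*x*(z*z)⁻¹*x = x*x*z⁻¹*(z⁻¹*x) := by group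
  _ = x*x*z⁻¹*(x*z⁻¹) := by rw [← k1]
  _ = x*x*(z⁻¹*x)*z⁻¹ := by group
  _ = x*x*(x*z⁻¹)*z⁻¹ := by rw [← k1]
  _ = x*(x*x*(z*z)⁻¹) := by group

lemma hCz : C * z = z * C := by
  rw [hC]
  calc x*x*(z*z)⁻¹*z = x*(x*z⁻¹) := by group
  _ = x*(z⁻¹*x) := by rw [k1]
  _ = (x*z⁻¹)*x := by group
  _ = (z⁻¹*x)*x := by rw [k1]
  _ = z*((z*z)⁻¹*x*x) := by group
  _ = z*((z*z)⁻¹*(x*x)) := by group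
  _ = z*((x*x)*(z*z)⁻¹) := by
        congr 1
        calc (z*z)⁻¹*(x*x) = z⁻¹*(z⁻¹*x)*x := by group
        _ = z⁻¹*(x*z⁻¹)*x := by rw [k1]
        _ = (z⁻¹*x)*(z⁻¹*x) := by group
        _ = (x*z⁻¹)*(x*z⁻¹) := by rw [k1]
        _ = (x*x)*(z*z)⁻¹ := by
              calc (x*z⁻¹)*(x*z⁻¹) = x*(z⁻¹*x)*z⁻¹ := by group
              _ = x*(x*z⁻¹)*z⁻¹ := by rw [k1]
              _ = (x*x)*(z*z)⁻¹ := by group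

lemma hxxzz : (z*z)⁻¹ * (x*x) = (x*x) * (z*z)⁻¹ := by
  calc (z*z)⁻¹*(x*x) = z⁻¹*(z⁻¹*x)*x := by group
  _ = z⁻¹*(x*z⁻¹)*x := by rw [k1]
  _ = (z⁻¹*x)*(z⁻¹*x) := by group
  _ = (x*z⁻¹)*(x*z⁻¹) := by rw [k1]
  _ = x*(z⁻¹*x)*z⁻¹ := by group
  _ = x*(x*z⁻¹)*z⁻¹ := by rw [k1]
  _ = (x*x)*(z*z)⁻¹ := by group

lemma hCy : C * y = y * C := by
  have key : (y*x*x*y)*(x*x) = (x*x)*(y*x*x*y) := by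
    rw [← hzz_inv]; exact hxxzz
  calc C * y = (x*x)*(y*x*x*y)*y := by show x*x*y*x*x*y*y = _; group
  _ = (y*x*x*y)*(x*x)*y := by rw [key]
  _ = y * C := by show _ = y * (x*x*y*x*x*y); group

lemma id1 : z * b * z⁻¹ = b⁻¹ * a⁻¹ := by
  show z * (y*y) * z⁻¹ = (y*y)⁻¹ * (x*x)⁻¹
  calc z*(y*y)*z⁻¹ = (z*y*z⁻¹)*(z*y*z⁻¹) := by group
  _ = (y⁻¹*z*y)*(y⁻¹*z*y) := by rw [czy]
  _ = y⁻¹*(z*z)*y := by group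
  _ = y⁻¹*(y⁻¹*x⁻¹*x⁻¹*y⁻¹)*y := by rw [hz2]
  _ = (y*y)⁻¹ * (x*x)⁻¹ := by group

lemma id2 : z⁻¹ * b * z = a⁻¹ * b⁻¹ := by
  show z⁻¹ * (y*y) * z = (x*x)⁻¹ * (y*y)⁻¹
  calc z⁻¹*(y*y)*z = (z⁻¹*y*z)*(z⁻¹*y*z) := by group
  _ = (y*z*y⁻¹)*(y*z*y⁻¹) := by rw [czy']
  _ = y*(z*z)*y⁻¹ := by group
  _ = y*(y⁻¹*x⁻¹*x⁻¹*y⁻¹)*y⁻¹ := by rw [hz2]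
  _ = (x*x)⁻¹ * (y*y)⁻¹ := by group

lemma id3 : x * b * x⁻¹ = b⁻¹ * a⁻¹ * C := by
  show x * (y*y) * x⁻¹ = (y*y)⁻¹ * (x*x)⁻¹ * (x*x*y*x*x*y)
  calc x*(y*y)*x⁻¹ = (x*y*x⁻¹)*(x*y*x⁻¹) := by group
  _ = (y⁻¹*x*y)*(y⁻¹*x*y) := by rw [cxy]
  _ = (y*y)⁻¹ * (x*x)⁻¹ * (x*x*y*x*x*y) := by group

lemma hCyy : C * (y*y)⁻¹ = (y*y)⁻¹ * C := by
  have c1 : Commute C y := hCy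
  exact ((c1.mul_right c1).inv_right).eq

lemma mid : y * (x*x) * y⁻¹ = a⁻¹ * b⁻¹ * C := by
  have h5 : (z*z)⁻¹ = (x*x)⁻¹ * C := by rw [hC]; group
  calc y*(x*x)*y⁻¹ = (y*x*x*y)*(y*y)⁻¹ := by group
  _ = (z*z)⁻¹*(y*y)⁻¹ := by rw [hzz_inv]
  _ = (x*x)⁻¹*(C*(y*y)⁻¹) := by rw [h5]; group
  _ = (x*x)⁻¹*((y*y)⁻¹*C) := by rw [hCyy]
  _ = a⁻¹ * b⁻¹ * C := by show _ = (x*x)⁻¹*(y*y)⁻¹*C; group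

lemma mid' : y⁻¹ * (x*x) * y = b⁻¹ * a⁻¹ * C := by
  have h5 : (z*z)⁻¹ = (x*x)⁻¹ * C := by rw [hC]; group
  have h6 : x*x = y⁻¹*(z*z)⁻¹*y⁻¹ := by rw [hzz_inv]; group
  calc y⁻¹*(x*x)*y = y⁻¹*(y⁻¹*(z*z)⁻¹*y⁻¹)*y := by rw [← h6]
  _ = (y*y)⁻¹*(z*z)⁻¹ := by group
  _ = (y*y)⁻¹*((x*x)⁻¹*C) := by rw [h5]
  _ = b⁻¹ * a⁻¹ * C := by show _ = (y*y)⁻¹*(x*x)⁻¹*C; group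

lemma id4 : x⁻¹ * b * x = a⁻¹ * b⁻¹ * C := by
  show x⁻¹ * (y*y) * x = _
  calc x⁻¹*(y*y)*x = (x⁻¹*y*x)*(x⁻¹*y*x) := by group
  _ = (y*x*y⁻¹)*(y*x*y⁻¹) := by rw [cxy']
  _ = y*(x*x)*y⁻¹ := by group
  _ = a⁻¹ * b⁻¹ * C := mid

lemma id5 : y * a * y⁻¹ = a⁻¹ * b⁻¹ * C := mid

lemma id6 : y⁻¹ * a * y = b⁻¹ * a⁻¹ * C := mid'

lemma idza : z * a * z⁻¹ = a := by
  have h : z * x * z⁻¹ = x := by rw [← rel3]; group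
  show z * (x*x) * z⁻¹ = x*x
  calc z*(x*x)*z⁻¹ = (z*x*z⁻¹)*(z*x*z⁻¹) := by group
  _ = x*x := by rw [h]

lemma idza' : z⁻¹ * a * z = a := by
  have h : z⁻¹ * x * z = x := by
    calc z⁻¹*x*z = z⁻¹*(x*z) := by group
    _ = z⁻¹*(z*x) := by rw [rel3]
    _ = x := by group
  show z⁻¹ * (x*x) * z = x*x
  calc z⁻¹*(x*x)*z = (z⁻¹*x*z)*(z⁻¹*x*z) := by group
  _ = x*x := by rw [h]

/-- the subgroup `⟨a, b, C⟩`. -/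
def T : Subgroup SphereBraidGroup4 := Subgroup.closure {a, b, C}

lemma haT : a ∈ T := Subgroup.subset_closure (Set.mem_insert _ _)
lemma hbT : b ∈ T := Subgroup.subset_closure (Set.mem_insert_of_mem _ (Set.mem_insert _ _))
lemma hCT : C ∈ T :=
  Subgroup.subset_closure (Set.mem_insert_of_mem _ (Set.mem_insert_of_mem _ rfl))

lemma conj_of_comm {c g : SphereBraidGroup4} (h : c * g = g * c) :
    g*c*g⁻¹ = c ∧ g⁻¹*c*g = c := by
  constructor
  · rw [show g*c = c*g from h.symm]; group
  · calc g⁻¹*c*g = g⁻¹*(c*g) := by group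
    _ = g⁻¹*(g*c) := by rw [h]
    _ = c := by group

lemma conj_helper (g : SphereBraidGroup4)
    (h : ∀ t ∈ ({a, b, C} : Set SphereBraidGroup4), g*t*g⁻¹ ∈ T ∧ g⁻¹*t*g ∈ T) :
    ∀ t ∈ T, g*t*g⁻¹ ∈ T ∧ g⁻¹*t*g ∈ T := by
  intro t ht
  refine Subgroup.closure_induction
    (p := fun t _ => g*t*g⁻¹ ∈ T ∧ g⁻¹*t*g ∈ T) h ?_ ?_ ?_ ht
  · simp only [one_mul, mul_one, inv_one]
    constructor
    · rw [mul_inv_cancel]; exact one_mem T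
    · rw [inv_mul_cancel]; exact one_mem T
  · rintro u v hu hv ⟨pu1, pu2⟩ ⟨pv1, pv2⟩
    constructor
    · have e : g*(u*v)*g⁻¹ = (g*u*g⁻¹)*(g*v*g⁻¹) := by group
      rw [e]; exact mul_mem pu1 pv1
    · have e : g⁻¹*(u*v)*g = (g⁻¹*u*g)*(g⁻¹*v*g) := by group
      rw [e]; exact mul_mem pu2 pv2
  · rintro u hu ⟨p1, p2⟩
    constructor
    · have e : g*u⁻¹*g⁻¹ = (g*u*g⁻¹)⁻¹ := by group
      rw [e]; exact inv_mem p1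
    · have e : g⁻¹*u⁻¹*g = (g⁻¹*u*g)⁻¹ := by group
      rw [e]; exact inv_mem p2

lemma gen_conj : ∀ i : Fin 3, ∀ t ∈ T, (δ i)*t*(δ i)⁻¹ ∈ T ∧ (δ i)⁻¹*t*(δ i) ∈ T := by
  intro i
  fin_cases i
  · refine conj_helper x ?_
    rintro t (rfl | rfl | rfl)
    · constructor
      · have e : x*a*x⁻¹ = a := by show x*(x*x)*x⁻¹ = x*x; group
        rw [e]; exact haT
      · have e : x⁻¹*a*x = a := by show x⁻¹*(x*x)*x = x*x; group
        rw [e]; exact haT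
    · exact ⟨id3 ▸ mul_mem (mul_mem (inv_mem hbT) (inv_mem haT)) hCT,
        id4 ▸ mul_mem (mul_mem (inv_mem haT) (inv_mem hbT)) hCT⟩
    · constructor
      · rw [(conj_of_comm hCx).1]; exact hCT
      · rw [(conj_of_comm hCx).2]; exact hCT
  · refine conj_helper y ?_
    rintro t (rfl | rfl | rfl)
    · exact ⟨id5 ▸ mul_mem (mul_mem (inv_mem haT) (inv_mem hbT)) hCT,
        id6 ▸ mul_mem (mul_mem (inv_mem hbT) (inv_mem haT)) hCT⟩
    · constructor
      · have e : y*b*y⁻¹ = b := by show y*(y*y)*y⁻¹ = y*y; group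
        rw [e]; exact hbT
      · have e : y⁻¹*b*y = b := by show y⁻¹*(y*y)*y = y*y; group
        rw [e]; exact hbT
    · constructor
      · rw [(conj_of_comm hCy).1]; exact hCT
      · rw [(conj_of_comm hCy).2]; exact hCT
  · refine conj_helper z ?_
    rintro t (rfl | rfl | rfl)
    · constructor
      · rw [idza]; exact haT
      · rw [idza']; exact haT
    · exact ⟨id1 ▸ mul_mem (inv_mem hbT) (inv_mem haT),
        id2 ▸ mul_mem (inv_mem haT) (inv_mem hbT)⟩
    · constructor
      · rw [(conj_of_comm hCz).1]; exact hCT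
      · rw [(conj_of_comm hCz).2]; exact hCT

def Nsub : Subgroup SphereBraidGroup4 where
  carrier := {g | ∀ t ∈ T, g*t*g⁻¹ ∈ T ∧ g⁻¹*t*g ∈ T}
  one_mem' := by
    intro t ht
    simp only [one_mul, mul_one, inv_one]
    exact ⟨ht, ht⟩
  mul_mem' := by
    rintro u v hu hv t ht
    constructor
    · have e : (u*v)*t*(u*v)⁻¹ = u*(v*t*v⁻¹)*u⁻¹ := by group
      rw [e]; exact (hu _ ((hv t ht).1)).1
    · have e : (u*v)⁻¹*t*(u*v) = v⁻¹*(u⁻¹*t*u)*v := by group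
      rw [e]; exact (hv _ ((hu t ht).2)).2
  inv_mem' := by
    intro u hu t ht
    simp only [inv_inv]
    exact ⟨(hu t ht).2, (hu t ht).1⟩

lemma all_conj : ∀ g : SphereBraidGroup4, ∀ t ∈ T, g*t*g⁻¹ ∈ T ∧ g⁻¹*t*g ∈ T := by
  intro g
  exact PresentedGroup.generated_by sphereBraidRel4 Nsub (fun j => gen_conj j) g

instance normalT : T.Normal := ⟨fun n hn g => (all_conj g n hn).1⟩


abbrev V := SphereBraidGroup4 ⧸ T
def mkT : SphereBraidGroup4 →* V := QuotientGroup.mk' T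
def u1 : V := mkT x
def u2 : V := mkT y
def u3 : V := mkT z
def sw1 : Equiv.Perm (Fin 4) := Equiv.swap 0 1
def sw2 : Equiv.Perm (Fin 4) := Equiv.swap 1 2
def sw3 : Equiv.Perm (Fin 4) := Equiv.swap 2 3

lemma mkT_eq_one {g : SphereBraidGroup4} (h : g ∈ T) : mkT g = 1 :=
  (QuotientGroup.eq_one_iff g).mpr h

lemma r11e : u1 * u1 = 1 := by
  rw [u1, ← map_mul]; exact mkT_eq_one haT
lemma r22e : u2 * u2 = 1 := by
  rw [u2, ← map_mul]; exact mkT_eq_one hbT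
lemma r33e : u3 * u3 = 1 := by
  rw [u3, ← map_mul]
  refine mkT_eq_one ?_
  have h5 : z*z = C⁻¹*(x*x) := by
    rw [hC, mul_inv_rev, inv_inv, mul_assoc, inv_mul_cancel, mul_one]
  rw [h5]; exact mul_mem (inv_mem hCT) haT
lemma r31e : u3 * u1 = u1 * u3 := by
  rw [u1, u3, ← map_mul, ← map_mul, ← rel3]
lemma r212e : u2 * (u1 * u2) = u1 * (u2 * u1) := by
  rw [u1, u2]
  simp only [← map_mul]
  rw [show y*(x*y) = y*x*y by group, show x*(y*x) = x*y*x by group, rel1]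
lemma r323e : u3 * (u2 * u3) = u2 * (u3 * u2) := by
  rw [u2, u3]
  simp only [← map_mul]
  rw [show z*(y*z) = z*y*z by group, show y*(z*y) = y*z*y by group, rel2]

lemma r11 (w : V) : u1 * (u1 * w) = w := by rw [← mul_assoc, r11e, one_mul]
lemma r22 (w : V) : u2 * (u2 * w) = w := by rw [← mul_assoc, r22e, one_mul]
lemma r33 (w : V) : u3 * (u3 * w) = w := by rw [← mul_assoc, r33e, one_mul]
lemma r31 (w : V) : u3 * (u1 * w) = u1 * (u3 * w) := by
  rw [← mul_assoc, r31e, mul_assoc]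
lemma r212 (w : V) : u2 * (u1 * (u2 * w)) = u1 * (u2 * (u1 * w)) := by
  have h : (u2 * (u1 * u2)) * w = (u1 * (u2 * u1)) * w := by rw [r212e]
  simpa [mul_assoc] using h
lemma r323 (w : V) : u3 * (u2 * (u3 * w)) = u2 * (u3 * (u2 * w)) := by
  have h : (u3 * (u2 * u3)) * w = (u2 * (u3 * u2)) * w := by rw [r323e]
  simpa [mul_assoc] using h
lemma r3213e : u3 * (u2 * (u1 * u3)) = u2 * (u3 * (u2 * u1)) := by
  rw [← r31e]
  exact r323 u1
lemma r3213 (w : V) : u3 * (u2 * (u1 * (u3 * w))) = u2 * (u3 * (u2 * (u1 * w)))  := by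
  have h : (u3 * (u2 * (u1 * u3))) * w = (u2 * (u3 * (u2 * u1))) * w := by rw [r3213e]
  simpa [mul_assoc] using h

def rep (σ : Equiv.Perm (Fin 4)) : V :=
  if σ = (1 : Equiv.Perm (Fin 4)) then (1 : V) else (if σ = (sw1) then (u1) else (if σ = (sw2) then (u2) else (if σ = (sw3) then (u3) else (if σ = (sw1 * sw2) then (u1 * (u2)) else (if σ = (sw1 * sw3) then (u1 * (u3)) else (if σ = (sw2 * sw1) then (u2 * (u1)) else (if σ = (sw2 * sw3) then (u2 * (u3)) else (if σ = (sw3 * sw2) then (u3 * (u2)) else (if σ = (sw1 * sw2 * sw1) then (u1 * (u2 * (u1))) else (if σ = (sw1 * sw2 * sw3) then (u1 * (u2 * (u3))) else (if σ = (sw1 * sw3 * sw2) then (u1 * (u3 * (u2))) else (if σ = (sw2 * sw1 * sw3) then (u2 * (u1 * (u3))) else (if σ = (sw2 * sw3 * sw2) then (u2 * (u3 * (u2))) else (if σ = (sw3 * sw2 * sw1) then (u3 * (u2 * (u1))) else (if σ = (sw1 * sw2 * sw1 * sw3) then (u1 * (u2 * (u1 * (u3)))) else (if σ = (sw1 * sw2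 * sw3 * sw2) then (u1 * (u2 * (u3 * (u2)))) else (if σ = (sw1 * sw3 * sw2 * sw1) then (u1 * (u3 * (u2 * (u1)))) else (if σ = (sw2 * sw1 * sw3 * sw2) then (u2 * (u1 * (u3 * (u2)))) else (if σ = (sw2 * sw3 * sw2 * sw1) then (u2 * (u3 * (u2 * (u1)))) else (if σ = (sw1 * sw2 * sw1 * sw3 * sw2) then (u1 * (u2 * (u1 * (u3 * (u2))))) else (if σ = (sw1 * sw2 * sw3 * sw2 * sw1) then (u1 * (u2 * (u3 * (u2 * (u1))))) else (if σ = (sw2 * sw1 * sw3 * sw2 * sw1) then (u2 * (u1 * (u3 * (u2 * (u1))))) else (if σ = (sw1 * sw2 * sw1 * sw3 * sw2 * sw1) then (u1 * (u2 * (u1 * (u3 * (u2 * (u1)))))) else (1))))))))))))))))))))))))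

lemma rep_eval_0 : rep (1 : Equiv.Perm (Fin 4)) = (1 : V) := by
  unfold rep
  rw [if_pos rfl]

lemma rep_eval_1 : rep (sw1) = (u1) := by
  unfold rep
  rw [if_neg (by decide : ¬ ((sw1) = (1 : Equiv.Perm (Fin 4)))),
    if_pos rfl]

lemma rep_eval_2 : rep (sw2) = (u2) := by
  unfold rep
  rw [if_neg (by decide : ¬ ((sw2) = (1 : Equiv.Perm (Fin 4)))),
    if_neg (by decide : ¬ ((sw2) = (sw1))),
    if_pos rfl]

lemma rep_eval_3 : rep (sw3) = (u3) := by
  unfold rep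
  rw [if_neg (by decide : ¬ ((sw3) = (1 : Equiv.Perm (Fin 4)))),
    if_neg (by decide : ¬ ((sw3) = (sw1))),
    if_neg (by decide : ¬ ((sw3) = (sw2))),
    if_pos rfl]

lemma rep_eval_4 : rep (sw1 * sw2) = (u1 * (u2)) := by
  unfold rep
  rw [if_neg (by decide : ¬ ((sw1 * sw2) = (1 : Equiv.Perm (Fin 4)))),
    if_neg (by decide : ¬ ((sw1 * sw2) = (sw1))),
    if_neg (by decide : ¬ ((sw1 * sw2) = (sw2))),
    if_neg (by decide : ¬ ((sw1 * sw2) = (sw3))),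
    if_pos rfl]

lemma rep_eval_5 : rep (sw1 * sw3) = (u1 * (u3)) := by
  unfold rep
  rw [if_neg (by decide : ¬ ((sw1 * sw3) = (1 : Equiv.Perm (Fin 4)))),
    if_neg (by decide : ¬ ((sw1 * sw3) = (sw1))),
    if_neg (by decide : ¬ ((sw1 * sw3) = (sw2))),
    if_neg (by decide : ¬ ((sw1 * sw3) = (sw3))),
    if_neg (by decide : ¬ ((sw1 * sw3) = (sw1 * sw2))),
    if_pos rfl]

lemma rep_eval_6 : rep (sw2 * sw1) = (u2 * (u1)) := by
  unfold rep
  rw [if_neg (by decide : ¬ ((sw2 * sw1) = (1 : Equiv.Perm (Fin 4)))),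
    if_neg (by decide : ¬ ((sw2 * sw1) = (sw1))),
    if_neg (by decide : ¬ ((sw2 * sw1) = (sw2))),
    if_neg (by decide : ¬ ((sw2 * sw1) = (sw3))),
    if_neg (by decide : ¬ ((sw2 * sw1) = (sw1 * sw2))),
    if_neg (by decide : ¬ ((sw2 * sw1) = (sw1 * sw3))),
    if_pos rfl]

lemma rep_eval_7 : rep (sw2 * sw3) = (u2 * (u3)) := by
  unfold rep
  rw [if_neg (by decide : ¬ ((sw2 * sw3) = (1 : Equiv.Perm (Fin 4)))),
    if_neg (by decide : ¬ ((sw2 * sw3) = (sw1))),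
    if_neg (by decide : ¬ ((sw2 * sw3) = (sw2))),
    if_neg (by decide : ¬ ((sw2 * sw3) = (sw3))),
    if_neg (by decide : ¬ ((sw2 * sw3) = (sw1 * sw2))),
    if_neg (by decide : ¬ ((sw2 * sw3) = (sw1 * sw3))),
    if_neg (by decide : ¬ ((sw2 * sw3) = (sw2 * sw1))),
    if_pos rfl]

lemma rep_eval_8 : rep (sw3 * sw2) = (u3 * (u2)) := by
  unfold rep
  rw [if_neg (by decide : ¬ ((sw3 * sw2) = (1 : Equiv.Perm (Fin 4)))),
    if_neg (by decide : ¬ ((sw3 * sw2) = (sw1))),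
    if_neg (by decide : ¬ ((sw3 * sw2) = (sw2))),
    if_neg (by decide : ¬ ((sw3 * sw2) = (sw3))),
    if_neg (by decide : ¬ ((sw3 * sw2) = (sw1 * sw2))),
    if_neg (by decide : ¬ ((sw3 * sw2) = (sw1 * sw3))),
    if_neg (by decide : ¬ ((sw3 * sw2) = (sw2 * sw1))),
    if_neg (by decide : ¬ ((sw3 * sw2) = (sw2 * sw3))),
    if_pos rfl]

lemma rep_eval_9 : rep (sw1 * sw2 * sw1) = (u1 * (u2 * (u1))) := by
  unfold rep
  rw [if_neg (by decide : ¬ ((sw1 * sw2 * sw1) = (1 : Equiv.Perm (Fin 4)))),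
    if_neg (by decide : ¬ ((sw1 * sw2 * sw1) = (sw1))),
    if_neg (by decide : ¬ ((sw1 * sw2 * sw1) = (sw2))),
    if_neg (by decide : ¬ ((sw1 * sw2 * sw1) = (sw3))),
    if_neg (by decide : ¬ ((sw1 * sw2 * sw1) = (sw1 * sw2))),
    if_neg (by decide : ¬ ((sw1 * sw2 * sw1) = (sw1 * sw3))),
    if_neg (by decide : ¬ ((sw1 * sw2 * sw1) = (sw2 * sw1))),
    if_neg (by decide : ¬ ((sw1 * sw2 * sw1) = (sw2 * sw3))),
    if_neg (by decide : ¬ ((sw1 * sw2 * sw1) = (sw3 * sw2))),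
    if_pos rfl]

lemma rep_eval_10 : rep (sw1 * sw2 * sw3) = (u1 * (u2 * (u3))) := by
  unfold rep
  rw [if_neg (by decide : ¬ ((sw1 * sw2 * sw3) = (1 : Equiv.Perm (Fin 4)))),
    if_neg (by decide : ¬ ((sw1 * sw2 * sw3) = (sw1))),
    if_neg (by decide : ¬ ((sw1 * sw2 * sw3) = (sw2))),
    if_neg (by decide : ¬ ((sw1 * sw2 * sw3) = (sw3))),
    if_neg (by decide : ¬ ((sw1 * sw2 * sw3) = (sw1 * sw2))),
    if_neg (by decide : ¬ ((sw1 * sw2 * sw3) = (sw1 * sw3))),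
    if_neg (by decide : ¬ ((sw1 * sw2 * sw3) = (sw2 * sw1))),
    if_neg (by decide : ¬ ((sw1 * sw2 * sw3) = (sw2 * sw3))),
    if_neg (by decide : ¬ ((sw1 * sw2 * sw3) = (sw3 * sw2))),
    if_neg (by decide : ¬ ((sw1 * sw2 * sw3) = (sw1 * sw2 * sw1))),
    if_pos rfl]

lemma rep_eval_11 : rep (sw1 * sw3 * sw2) = (u1 * (u3 * (u2))) := by
  unfold rep
  rw [if_neg (by decide : ¬ ((sw1 * sw3 * sw2) = (1 : Equiv.Perm (Fin 4)))),
    if_neg (by decide : ¬ ((sw1 * sw3 * sw2) = (sw1))),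
    if_neg (by decide : ¬ ((sw1 * sw3 * sw2) = (sw2))),
    if_neg (by decide : ¬ ((sw1 * sw3 * sw2) = (sw3))),
    if_neg (by decide : ¬ ((sw1 * sw3 * sw2) = (sw1 * sw2))),
    if_neg (by decide : ¬ ((sw1 * sw3 * sw2) = (sw1 * sw3))),
    if_neg (by decide : ¬ ((sw1 * sw3 * sw2) = (sw2 * sw1))),
    if_neg (by decide : ¬ ((sw1 * sw3 * sw2) = (sw2 * sw3))),
    if_neg (by decide : ¬ ((sw1 * sw3 * sw2) = (sw3 * sw2))),
    if_neg (by decide : ¬ ((sw1 * sw3 * sw2) = (sw1 * sw2 * sw1))),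
    if_neg (by decide : ¬ ((sw1 * sw3 * sw2) = (sw1 * sw2 * sw3))),
    if_pos rfl]

lemma rep_eval_12 : rep (sw2 * sw1 * sw3) = (u2 * (u1 * (u3))) := by
  unfold rep
  rw [if_neg (by decide : ¬ ((sw2 * sw1 * sw3) = (1 : Equiv.Perm (Fin 4)))),
    if_neg (by decide : ¬ ((sw2 * sw1 * sw3) = (sw1))),
    if_neg (by decide : ¬ ((sw2 * sw1 * sw3) = (sw2))),
    if_neg (by decide : ¬ ((sw2 * sw1 * sw3) = (sw3))),
    if_neg (by decide : ¬ ((sw2 * sw1 * sw3) = (sw1 * sw2))),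
    if_neg (by decide : ¬ ((sw2 * sw1 * sw3) = (sw1 * sw3))),
    if_neg (by decide : ¬ ((sw2 * sw1 * sw3) = (sw2 * sw1))),
    if_neg (by decide : ¬ ((sw2 * sw1 * sw3) = (sw2 * sw3))),
    if_neg (by decide : ¬ ((sw2 * sw1 * sw3) = (sw3 * sw2))),
    if_neg (by decide : ¬ ((sw2 * sw1 * sw3) = (sw1 * sw2 * sw1))),
    if_neg (by decide : ¬ ((sw2 * sw1 * sw3) = (sw1 * sw2 * sw3))),
    if_neg (by decide : ¬ ((sw2 * sw1 * sw3) = (sw1 * sw3 * sw2))),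
    if_pos rfl]

lemma rep_eval_13 : rep (sw2 * sw3 * sw2) = (u2 * (u3 * (u2))) := by
  unfold rep
  rw [if_neg (by decide : ¬ ((sw2 * sw3 * sw2) = (1 : Equiv.Perm (Fin 4)))),
    if_neg (by decide : ¬ ((sw2 * sw3 * sw2) = (sw1))),
    if_neg (by decide : ¬ ((sw2 * sw3 * sw2) = (sw2))),
    if_neg (by decide : ¬ ((sw2 * sw3 * sw2) = (sw3))),
    if_neg (by decide : ¬ ((sw2 * sw3 * sw2) = (sw1 * sw2))),
    if_neg (by decide : ¬ ((sw2 * sw3 * sw2) = (sw1 * sw3))),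
    if_neg (by decide : ¬ ((sw2 * sw3 * sw2) = (sw2 * sw1))),
    if_neg (by decide : ¬ ((sw2 * sw3 * sw2) = (sw2 * sw3))),
    if_neg (by decide : ¬ ((sw2 * sw3 * sw2) = (sw3 * sw2))),
    if_neg (by decide : ¬ ((sw2 * sw3 * sw2) = (sw1 * sw2 * sw1))),
    if_neg (by decide : ¬ ((sw2 * sw3 * sw2) = (sw1 * sw2 * sw3))),
    if_neg (by decide : ¬ ((sw2 * sw3 * sw2) = (sw1 * sw3 * sw2))),
    if_neg (by decide : ¬ ((sw2 * sw3 * sw2) = (sw2 * sw1 * sw3))),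
    if_pos rfl]

lemma rep_eval_14 : rep (sw3 * sw2 * sw1) = (u3 * (u2 * (u1))) := by
  unfold rep
  rw [if_neg (by decide : ¬ ((sw3 * sw2 * sw1) = (1 : Equiv.Perm (Fin 4)))),
    if_neg (by decide : ¬ ((sw3 * sw2 * sw1) = (sw1))),
    if_neg (by decide : ¬ ((sw3 * sw2 * sw1) = (sw2))),
    if_neg (by decide : ¬ ((sw3 * sw2 * sw1) = (sw3))),
    if_neg (by decide : ¬ ((sw3 * sw2 * sw1) = (sw1 * sw2))),
    if_neg (by decide : ¬ ((sw3 * sw2 * sw1) = (sw1 * sw3))),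
    if_neg (by decide : ¬ ((sw3 * sw2 * sw1) = (sw2 * sw1))),
    if_neg (by decide : ¬ ((sw3 * sw2 * sw1) = (sw2 * sw3))),
    if_neg (by decide : ¬ ((sw3 * sw2 * sw1) = (sw3 * sw2))),
    if_neg (by decide : ¬ ((sw3 * sw2 * sw1) = (sw1 * sw2 * sw1))),
    if_neg (by decide : ¬ ((sw3 * sw2 * sw1) = (sw1 * sw2 * sw3))),
    if_neg (by decide : ¬ ((sw3 * sw2 * sw1) = (sw1 * sw3 * sw2))),
    if_neg (by decide : ¬ ((sw3 * sw2 * sw1) = (sw2 * sw1 * sw3))),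
    if_neg (by decide : ¬ ((sw3 * sw2 * sw1) = (sw2 * sw3 * sw2))),
    if_pos rfl]

lemma rep_eval_15 : rep (sw1 * sw2 * sw1 * sw3) = (u1 * (u2 * (u1 * (u3)))) := by
  unfold rep
  rw [if_neg (by decide : ¬ ((sw1 * sw2 * sw1 * sw3) = (1 : Equiv.Perm (Fin 4)))),
    if_neg (by decide : ¬ ((sw1 * sw2 * sw1 * sw3) = (sw1))),
    if_neg (by decide : ¬ ((sw1 * sw2 * sw1 * sw3) = (sw2))),
    if_neg (by decide : ¬ ((sw1 * sw2 * sw1 * sw3) = (sw3))),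
    if_neg (by decide : ¬ ((sw1 * sw2 * sw1 * sw3) = (sw1 * sw2))),
    if_neg (by decide : ¬ ((sw1 * sw2 * sw1 * sw3) = (sw1 * sw3))),
    if_neg (by decide : ¬ ((sw1 * sw2 * sw1 * sw3) = (sw2 * sw1))),
    if_neg (by decide : ¬ ((sw1 * sw2 * sw1 * sw3) = (sw2 * sw3))),
    if_neg (by decide : ¬ ((sw1 * sw2 * sw1 * sw3) = (sw3 * sw2))),
    if_neg (by decide : ¬ ((sw1 * sw2 * sw1 * sw3) = (sw1 * sw2 * sw1))),
    if_neg (by decide : ¬ ((sw1 * sw2 * sw1 * sw3) = (sw1 * sw2 * sw3))),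
    if_neg (by decide : ¬ ((sw1 * sw2 * sw1 * sw3) = (sw1 * sw3 * sw2))),
    if_neg (by decide : ¬ ((sw1 * sw2 * sw1 * sw3) = (sw2 * sw1 * sw3))),
    if_neg (by decide : ¬ ((sw1 * sw2 * sw1 * sw3) = (sw2 * sw3 * sw2))),
    if_neg (by decide : ¬ ((sw1 * sw2 * sw1 * sw3) = (sw3 * sw2 * sw1))),
    if_pos rfl]

lemma rep_eval_16 : rep (sw1 * sw2 * sw3 * sw2) = (u1 * (u2 * (u3 * (u2)))) := by
  unfold rep
  rw [if_neg (by decide : ¬ ((sw1 * sw2 * sw3 * sw2) = (1 : Equiv.Perm (Fin 4)))),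
    if_neg (by decide : ¬ ((sw1 * sw2 * sw3 * sw2) = (sw1))),
    if_neg (by decide : ¬ ((sw1 * sw2 * sw3 * sw2) = (sw2))),
    if_neg (by decide : ¬ ((sw1 * sw2 * sw3 * sw2) = (sw3))),
    if_neg (by decide : ¬ ((sw1 * sw2 * sw3 * sw2) = (sw1 * sw2))),
    if_neg (by decide : ¬ ((sw1 * sw2 * sw3 * sw2) = (sw1 * sw3))),
    if_neg (by decide : ¬ ((sw1 * sw2 * sw3 * sw2) = (sw2 * sw1))),
    if_neg (by decide : ¬ ((sw1 * sw2 * sw3 * sw2) = (sw2 * sw3))),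
    if_neg (by decide : ¬ ((sw1 * sw2 * sw3 * sw2) = (sw3 * sw2))),
    if_neg (by decide : ¬ ((sw1 * sw2 * sw3 * sw2) = (sw1 * sw2 * sw1))),
    if_neg (by decide : ¬ ((sw1 * sw2 * sw3 * sw2) = (sw1 * sw2 * sw3))),
    if_neg (by decide : ¬ ((sw1 * sw2 * sw3 * sw2) = (sw1 * sw3 * sw2))),
    if_neg (by decide : ¬ ((sw1 * sw2 * sw3 * sw2) = (sw2 * sw1 * sw3))),
    if_neg (by decide : ¬ ((sw1 * sw2 * sw3 * sw2) = (sw2 * sw3 * sw2))),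
    if_neg (by decide : ¬ ((sw1 * sw2 * sw3 * sw2) = (sw3 * sw2 * sw1))),
    if_neg (by decide : ¬ ((sw1 * sw2 * sw3 * sw2) = (sw1 * sw2 * sw1 * sw3))),
    if_pos rfl]

lemma rep_eval_17 : rep (sw1 * sw3 * sw2 * sw1) = (u1 * (u3 * (u2 * (u1)))) := by
  unfold rep
  rw [if_neg (by decide : ¬ ((sw1 * sw3 * sw2 * sw1) = (1 : Equiv.Perm (Fin 4)))),
    if_neg (by decide : ¬ ((sw1 * sw3 * sw2 * sw1) = (sw1))),
    if_neg (by decide : ¬ ((sw1 * sw3 * sw2 * sw1) = (sw2))),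
    if_neg (by decide : ¬ ((sw1 * sw3 * sw2 * sw1) = (sw3))),
    if_neg (by decide : ¬ ((sw1 * sw3 * sw2 * sw1) = (sw1 * sw2))),
    if_neg (by decide : ¬ ((sw1 * sw3 * sw2 * sw1) = (sw1 * sw3))),
    if_neg (by decide : ¬ ((sw1 * sw3 * sw2 * sw1) = (sw2 * sw1))),
    if_neg (by decide : ¬ ((sw1 * sw3 * sw2 * sw1) = (sw2 * sw3))),
    if_neg (by decide : ¬ ((sw1 * sw3 * sw2 * sw1) = (sw3 * sw2))),
    if_neg (by decide : ¬ ((sw1 * sw3 * sw2 * sw1) = (sw1 * sw2 * sw1))),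
    if_neg (by decide : ¬ ((sw1 * sw3 * sw2 * sw1) = (sw1 * sw2 * sw3))),
    if_neg (by decide : ¬ ((sw1 * sw3 * sw2 * sw1) = (sw1 * sw3 * sw2))),
    if_neg (by decide : ¬ ((sw1 * sw3 * sw2 * sw1) = (sw2 * sw1 * sw3))),
    if_neg (by decide : ¬ ((sw1 * sw3 * sw2 * sw1) = (sw2 * sw3 * sw2))),
    if_neg (by decide : ¬ ((sw1 * sw3 * sw2 * sw1) = (sw3 * sw2 * sw1))),
    if_neg (by decide : ¬ ((sw1 * sw3 * sw2 * sw1) = (sw1 * sw2 * sw1 * sw3))),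
    if_neg (by decide : ¬ ((sw1 * sw3 * sw2 * sw1) = (sw1 * sw2 * sw3 * sw2))),
    if_pos rfl]

lemma rep_eval_18 : rep (sw2 * sw1 * sw3 * sw2) = (u2 * (u1 * (u3 * (u2)))) := by
  unfold rep
  rw [if_neg (by decide : ¬ ((sw2 * sw1 * sw3 * sw2) = (1 : Equiv.Perm (Fin 4)))),
    if_neg (by decide : ¬ ((sw2 * sw1 * sw3 * sw2) = (sw1))),
    if_neg (by decide : ¬ ((sw2 * sw1 * sw3 * sw2) = (sw2))),
    if_neg (by decide : ¬ ((sw2 * sw1 * sw3 * sw2) = (sw3))),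
    if_neg (by decide : ¬ ((sw2 * sw1 * sw3 * sw2) = (sw1 * sw2))),
    if_neg (by decide : ¬ ((sw2 * sw1 * sw3 * sw2) = (sw1 * sw3))),
    if_neg (by decide : ¬ ((sw2 * sw1 * sw3 * sw2) = (sw2 * sw1))),
    if_neg (by decide : ¬ ((sw2 * sw1 * sw3 * sw2) = (sw2 * sw3))),
    if_neg (by decide : ¬ ((sw2 * sw1 * sw3 * sw2) = (sw3 * sw2))),
    if_neg (by decide : ¬ ((sw2 * sw1 * sw3 * sw2) = (sw1 * sw2 * sw1))),
    if_neg (by decide : ¬ ((sw2 * sw1 * sw3 * sw2) = (sw1 * sw2 * sw3))),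
    if_neg (by decide : ¬ ((sw2 * sw1 * sw3 * sw2) = (sw1 * sw3 * sw2))),
    if_neg (by decide : ¬ ((sw2 * sw1 * sw3 * sw2) = (sw2 * sw1 * sw3))),
    if_neg (by decide : ¬ ((sw2 * sw1 * sw3 * sw2) = (sw2 * sw3 * sw2))),
    if_neg (by decide : ¬ ((sw2 * sw1 * sw3 * sw2) = (sw3 * sw2 * sw1))),
    if_neg (by decide : ¬ ((sw2 * sw1 * sw3 * sw2) = (sw1 * sw2 * sw1 * sw3))),
    if_neg (by decide : ¬ ((sw2 * sw1 * sw3 * sw2) = (sw1 * sw2 * sw3 * sw2))),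
    if_neg (by decide : ¬ ((sw2 * sw1 * sw3 * sw2) = (sw1 * sw3 * sw2 * sw1))),
    if_pos rfl]

lemma rep_eval_19 : rep (sw2 * sw3 * sw2 * sw1) = (u2 * (u3 * (u2 * (u1)))) := by
  unfold rep
  rw [if_neg (by decide : ¬ ((sw2 * sw3 * sw2 * sw1) = (1 : Equiv.Perm (Fin 4)))),
    if_neg (by decide : ¬ ((sw2 * sw3 * sw2 * sw1) = (sw1))),
    if_neg (by decide : ¬ ((sw2 * sw3 * sw2 * sw1) = (sw2))),
    if_neg (by decide : ¬ ((sw2 * sw3 * sw2 * sw1) = (sw3))),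
    if_neg (by decide : ¬ ((sw2 * sw3 * sw2 * sw1) = (sw1 * sw2))),
    if_neg (by decide : ¬ ((sw2 * sw3 * sw2 * sw1) = (sw1 * sw3))),
    if_neg (by decide : ¬ ((sw2 * sw3 * sw2 * sw1) = (sw2 * sw1))),
    if_neg (by decide : ¬ ((sw2 * sw3 * sw2 * sw1) = (sw2 * sw3))),
    if_neg (by decide : ¬ ((sw2 * sw3 * sw2 * sw1) = (sw3 * sw2))),
    if_neg (by decide : ¬ ((sw2 * sw3 * sw2 * sw1) = (sw1 * sw2 * sw1))),
    if_neg (by decide : ¬ ((sw2 * sw3 * sw2 * sw1) = (sw1 * sw2 * sw3))),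
    if_neg (by decide : ¬ ((sw2 * sw3 * sw2 * sw1) = (sw1 * sw3 * sw2))),
    if_neg (by decide : ¬ ((sw2 * sw3 * sw2 * sw1) = (sw2 * sw1 * sw3))),
    if_neg (by decide : ¬ ((sw2 * sw3 * sw2 * sw1) = (sw2 * sw3 * sw2))),
    if_neg (by decide : ¬ ((sw2 * sw3 * sw2 * sw1) = (sw3 * sw2 * sw1))),
    if_neg (by decide : ¬ ((sw2 * sw3 * sw2 * sw1) = (sw1 * sw2 * sw1 * sw3))),
    if_neg (by decide : ¬ ((sw2 * sw3 * sw2 * sw1) = (sw1 * sw2 * sw3 * sw2))),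
    if_neg (by decide : ¬ ((sw2 * sw3 * sw2 * sw1) = (sw1 * sw3 * sw2 * sw1))),
    if_neg (by decide : ¬ ((sw2 * sw3 * sw2 * sw1) = (sw2 * sw1 * sw3 * sw2))),
    if_pos rfl]

lemma rep_eval_20 : rep (sw1 * sw2 * sw1 * sw3 * sw2) = (u1 * (u2 * (u1 * (u3 * (u2))))) := by
  unfold rep
  rw [if_neg (by decide : ¬ ((sw1 * sw2 * sw1 * sw3 * sw2) = (1 : Equiv.Perm (Fin 4)))),
    if_neg (by decide : ¬ ((sw1 * sw2 * sw1 * sw3 * sw2) = (sw1))),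
    if_neg (by decide : ¬ ((sw1 * sw2 * sw1 * sw3 * sw2) = (sw2))),
    if_neg (by decide : ¬ ((sw1 * sw2 * sw1 * sw3 * sw2) = (sw3))),
    if_neg (by decide : ¬ ((sw1 * sw2 * sw1 * sw3 * sw2) = (sw1 * sw2))),
    if_neg (by decide : ¬ ((sw1 * sw2 * sw1 * sw3 * sw2) = (sw1 * sw3))),
    if_neg (by decide : ¬ ((sw1 * sw2 * sw1 * sw3 * sw2) = (sw2 * sw1))),
    if_neg (by decide : ¬ ((sw1 * sw2 * sw1 * sw3 * sw2) = (sw2 * sw3))),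
    if_neg (by decide : ¬ ((sw1 * sw2 * sw1 * sw3 * sw2) = (sw3 * sw2))),
    if_neg (by decide : ¬ ((sw1 * sw2 * sw1 * sw3 * sw2) = (sw1 * sw2 * sw1))),
    if_neg (by decide : ¬ ((sw1 * sw2 * sw1 * sw3 * sw2) = (sw1 * sw2 * sw3))),
    if_neg (by decide : ¬ ((sw1 * sw2 * sw1 * sw3 * sw2) = (sw1 * sw3 * sw2))),
    if_neg (by decide : ¬ ((sw1 * sw2 * sw1 * sw3 * sw2) = (sw2 * sw1 * sw3))),
    if_neg (by decide : ¬ ((sw1 * sw2 * sw1 * sw3 * sw2) = (sw2 * sw3 * sw2))),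
    if_neg (by decide : ¬ ((sw1 * sw2 * sw1 * sw3 * sw2) = (sw3 * sw2 * sw1))),
    if_neg (by decide : ¬ ((sw1 * sw2 * sw1 * sw3 * sw2) = (sw1 * sw2 * sw1 * sw3))),
    if_neg (by decide : ¬ ((sw1 * sw2 * sw1 * sw3 * sw2) = (sw1 * sw2 * sw3 * sw2))),
    if_neg (by decide : ¬ ((sw1 * sw2 * sw1 * sw3 * sw2) = (sw1 * sw3 * sw2 * sw1))),
    if_neg (by decide : ¬ ((sw1 * sw2 * sw1 * sw3 * sw2) = (sw2 * sw1 * sw3 * sw2))),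
    if_neg (by decide : ¬ ((sw1 * sw2 * sw1 * sw3 * sw2) = (sw2 * sw3 * sw2 * sw1))),
    if_pos rfl]

lemma rep_eval_21 : rep (sw1 * sw2 * sw3 * sw2 * sw1) = (u1 * (u2 * (u3 * (u2 * (u1))))) := by
  unfold rep
  rw [if_neg (by decide : ¬ ((sw1 * sw2 * sw3 * sw2 * sw1) = (1 : Equiv.Perm (Fin 4)))),
    if_neg (by decide : ¬ ((sw1 * sw2 * sw3 * sw2 * sw1) = (sw1))),
    if_neg (by decide : ¬ ((sw1 * sw2 * sw3 * sw2 * sw1) = (sw2))),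
    if_neg (by decide : ¬ ((sw1 * sw2 * sw3 * sw2 * sw1) = (sw3))),
    if_neg (by decide : ¬ ((sw1 * sw2 * sw3 * sw2 * sw1) = (sw1 * sw2))),
    if_neg (by decide : ¬ ((sw1 * sw2 * sw3 * sw2 * sw1) = (sw1 * sw3))),
    if_neg (by decide : ¬ ((sw1 * sw2 * sw3 * sw2 * sw1) = (sw2 * sw1))),
    if_neg (by decide : ¬ ((sw1 * sw2 * sw3 * sw2 * sw1) = (sw2 * sw3))),
    if_neg (by decide : ¬ ((sw1 * sw2 * sw3 * sw2 * sw1) = (sw3 * sw2))),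
    if_neg (by decide : ¬ ((sw1 * sw2 * sw3 * sw2 * sw1) = (sw1 * sw2 * sw1))),
    if_neg (by decide : ¬ ((sw1 * sw2 * sw3 * sw2 * sw1) = (sw1 * sw2 * sw3))),
    if_neg (by decide : ¬ ((sw1 * sw2 * sw3 * sw2 * sw1) = (sw1 * sw3 * sw2))),
    if_neg (by decide : ¬ ((sw1 * sw2 * sw3 * sw2 * sw1) = (sw2 * sw1 * sw3))),
    if_neg (by decide : ¬ ((sw1 * sw2 * sw3 * sw2 * sw1) = (sw2 * sw3 * sw2))),
    if_neg (by decide : ¬ ((sw1 * sw2 * sw3 * sw2 * sw1) = (sw3 * sw2 * sw1))),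
    if_neg (by decide : ¬ ((sw1 * sw2 * sw3 * sw2 * sw1) = (sw1 * sw2 * sw1 * sw3))),
    if_neg (by decide : ¬ ((sw1 * sw2 * sw3 * sw2 * sw1) = (sw1 * sw2 * sw3 * sw2))),
    if_neg (by decide : ¬ ((sw1 * sw2 * sw3 * sw2 * sw1) = (sw1 * sw3 * sw2 * sw1))),
    if_neg (by decide : ¬ ((sw1 * sw2 * sw3 * sw2 * sw1) = (sw2 * sw1 * sw3 * sw2))),
    if_neg (by decide : ¬ ((sw1 * sw2 * sw3 * sw2 * sw1) = (sw2 * sw3 * sw2 * sw1))),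
    if_neg (by decide : ¬ ((sw1 * sw2 * sw3 * sw2 * sw1) = (sw1 * sw2 * sw1 * sw3 * sw2))),
    if_pos rfl]

lemma rep_eval_22 : rep (sw2 * sw1 * sw3 * sw2 * sw1) = (u2 * (u1 * (u3 * (u2 * (u1))))) := by
  unfold rep
  rw [if_neg (by decide : ¬ ((sw2 * sw1 * sw3 * sw2 * sw1) = (1 : Equiv.Perm (Fin 4)))),
    if_neg (by decide : ¬ ((sw2 * sw1 * sw3 * sw2 * sw1) = (sw1))),
    if_neg (by decide : ¬ ((sw2 * sw1 * sw3 * sw2 * sw1) = (sw2))),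
    if_neg (by decide : ¬ ((sw2 * sw1 * sw3 * sw2 * sw1) = (sw3))),
    if_neg (by decide : ¬ ((sw2 * sw1 * sw3 * sw2 * sw1) = (sw1 * sw2))),
    if_neg (by decide : ¬ ((sw2 * sw1 * sw3 * sw2 * sw1) = (sw1 * sw3))),
    if_neg (by decide : ¬ ((sw2 * sw1 * sw3 * sw2 * sw1) = (sw2 * sw1))),
    if_neg (by decide : ¬ ((sw2 * sw1 * sw3 * sw2 * sw1) = (sw2 * sw3))),
    if_neg (by decide : ¬ ((sw2 * sw1 * sw3 * sw2 * sw1) = (sw3 * sw2))),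
    if_neg (by decide : ¬ ((sw2 * sw1 * sw3 * sw2 * sw1) = (sw1 * sw2 * sw1))),
    if_neg (by decide : ¬ ((sw2 * sw1 * sw3 * sw2 * sw1) = (sw1 * sw2 * sw3))),
    if_neg (by decide : ¬ ((sw2 * sw1 * sw3 * sw2 * sw1) = (sw1 * sw3 * sw2))),
    if_neg (by decide : ¬ ((sw2 * sw1 * sw3 * sw2 * sw1) = (sw2 * sw1 * sw3))),
    if_neg (by decide : ¬ ((sw2 * sw1 * sw3 * sw2 * sw1) = (sw2 * sw3 * sw2))),
    if_neg (by decide : ¬ ((sw2 * sw1 * sw3 * sw2 * sw1) = (sw3 * sw2 * sw1))),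
    if_neg (by decide : ¬ ((sw2 * sw1 * sw3 * sw2 * sw1) = (sw1 * sw2 * sw1 * sw3))),
    if_neg (by decide : ¬ ((sw2 * sw1 * sw3 * sw2 * sw1) = (sw1 * sw2 * sw3 * sw2))),
    if_neg (by decide : ¬ ((sw2 * sw1 * sw3 * sw2 * sw1) = (sw1 * sw3 * sw2 * sw1))),
    if_neg (by decide : ¬ ((sw2 * sw1 * sw3 * sw2 * sw1) = (sw2 * sw1 * sw3 * sw2))),
    if_neg (by decide : ¬ ((sw2 * sw1 * sw3 * sw2 * sw1) = (sw2 * sw3 * sw2 * sw1))),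
    if_neg (by decide : ¬ ((sw2 * sw1 * sw3 * sw2 * sw1) = (sw1 * sw2 * sw1 * sw3 * sw2))),
    if_neg (by decide : ¬ ((sw2 * sw1 * sw3 * sw2 * sw1) = (sw1 * sw2 * sw3 * sw2 * sw1))),
    if_pos rfl]

lemma rep_eval_23 : rep (sw1 * sw2 * sw1 * sw3 * sw2 * sw1) = (u1 * (u2 * (u1 * (u3 * (u2 * (u1)))))) := by
  unfold rep
  rw [if_neg (by decide : ¬ ((sw1 * sw2 * sw1 * sw3 * sw2 * sw1) = (1 : Equiv.Perm (Fin 4)))),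
    if_neg (by decide : ¬ ((sw1 * sw2 * sw1 * sw3 * sw2 * sw1) = (sw1))),
    if_neg (by decide : ¬ ((sw1 * sw2 * sw1 * sw3 * sw2 * sw1) = (sw2))),
    if_neg (by decide : ¬ ((sw1 * sw2 * sw1 * sw3 * sw2 * sw1) = (sw3))),
    if_neg (by decide : ¬ ((sw1 * sw2 * sw1 * sw3 * sw2 * sw1) = (sw1 * sw2))),
    if_neg (by decide : ¬ ((sw1 * sw2 * sw1 * sw3 * sw2 * sw1) = (sw1 * sw3))),
    if_neg (by decide : ¬ ((sw1 * sw2 * sw1 * sw3 * sw2 * sw1) = (sw2 * sw1))),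
    if_neg (by decide : ¬ ((sw1 * sw2 * sw1 * sw3 * sw2 * sw1) = (sw2 * sw3))),
    if_neg (by decide : ¬ ((sw1 * sw2 * sw1 * sw3 * sw2 * sw1) = (sw3 * sw2))),
    if_neg (by decide : ¬ ((sw1 * sw2 * sw1 * sw3 * sw2 * sw1) = (sw1 * sw2 * sw1))),
    if_neg (by decide : ¬ ((sw1 * sw2 * sw1 * sw3 * sw2 * sw1) = (sw1 * sw2 * sw3))),
    if_neg (by decide : ¬ ((sw1 * sw2 * sw1 * sw3 * sw2 * sw1) = (sw1 * sw3 * sw2))),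
    if_neg (by decide : ¬ ((sw1 * sw2 * sw1 * sw3 * sw2 * sw1) = (sw2 * sw1 * sw3))),
    if_neg (by decide : ¬ ((sw1 * sw2 * sw1 * sw3 * sw2 * sw1) = (sw2 * sw3 * sw2))),
    if_neg (by decide : ¬ ((sw1 * sw2 * sw1 * sw3 * sw2 * sw1) = (sw3 * sw2 * sw1))),
    if_neg (by decide : ¬ ((sw1 * sw2 * sw1 * sw3 * sw2 * sw1) = (sw1 * sw2 * sw1 * sw3))),
    if_neg (by decide : ¬ ((sw1 * sw2 * sw1 * sw3 * sw2 * sw1) = (sw1 * sw2 * sw3 * sw2))),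
    if_neg (by decide : ¬ ((sw1 * sw2 * sw1 * sw3 * sw2 * sw1) = (sw1 * sw3 * sw2 * sw1))),
    if_neg (by decide : ¬ ((sw1 * sw2 * sw1 * sw3 * sw2 * sw1) = (sw2 * sw1 * sw3 * sw2))),
    if_neg (by decide : ¬ ((sw1 * sw2 * sw1 * sw3 * sw2 * sw1) = (sw2 * sw3 * sw2 * sw1))),
    if_neg (by decide : ¬ ((sw1 * sw2 * sw1 * sw3 * sw2 * sw1) = (sw1 * sw2 * sw1 * sw3 * sw2))),
    if_neg (by decide : ¬ ((sw1 * sw2 * sw1 * sw3 * sw2 * sw1) = (sw1 * sw2 * sw3 * sw2 * sw1))),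
    if_neg (by decide : ¬ ((sw1 * sw2 * sw1 * sw3 * sw2 * sw1) = (sw2 * sw1 * sw3 * sw2 * sw1))),
    if_pos rfl]

set_option maxHeartbeats 1000000 in
lemma hall : ∀ τ : Equiv.Perm (Fin 4), τ = (1 : Equiv.Perm (Fin 4)) ∨ τ = (sw1) ∨ τ = (sw2) ∨ τ = (sw3) ∨ τ = (sw1 * sw2) ∨ τ = (sw1 * sw3) ∨ τ = (sw2 * sw1) ∨ τ = (sw2 * sw3) ∨ τ = (sw3 * sw2) ∨ τ = (sw1 * sw2 * sw1) ∨ τ = (sw1 * sw2 * sw3) ∨ τ = (sw1 * sw3 * sw2) ∨ τ = (sw2 * sw1 * sw3) ∨ τ = (sw2 * sw3 * sw2) ∨ τ = (sw3 * sw2 * sw1) ∨ τ = (sw1 * sw2 * sw1 * sw3) ∨ τ = (sw1 * sw2 * sw3 * sw2) ∨ τ = (sw1 * sw3 * sw2 * sw1) ∨ τ = (sw2 * sw1 * sw3 * sw2) ∨ τ = (sw2 * sw3 * sw2 * sw1) ∨ τ = (sw1 * sw2 * sw1 * sw3 * sw2) ∨ τ = (sw1 * sw2 * sw3 * sw2 *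 sw1) ∨ τ = (sw2 * sw1 * sw3 * sw2 * sw1) ∨ τ = (sw1 * sw2 * sw1 * sw3 * sw2 * sw1) := by decide


end SB4


namespace SB4

set_option maxHeartbeats 4000000 in
lemma key (i : Fin 3) (σ : Equiv.Perm (Fin 4)) :
    mkT (δ i) * rep σ = rep (spherePermGen i * σ) := by
  have hi : i = 0 ∨ i = 1 ∨ i = 2 := by omega
  rcases hi with rfl | rfl | rfl <;> rcases hall σ with rfl|rfl|rfl|rfl|rfl|rfl|rfl|rfl|rfl|rfl|rfl|rfl|rfl|rfl|rfl|rfl|rfl|rfl|rfl|rfl|rfl|rfl|rfl|rfl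
  · rw [show mkT (δ 0) = u1 from rfl, rep_eval_0,
      show spherePermGen 0 * (1 : Equiv.Perm (Fin 4)) = (sw1) by decide, rep_eval_1]
    try simp only [r11, r22, r33, r31, r212, r323, r3213, r11e, r22e, r33e, r31e, r212e, r323e, r3213e, one_mul, mul_one]
  · rw [show mkT (δ 0) = u1 from rfl, rep_eval_1,
      show spherePermGen 0 * (sw1) = (1 : Equiv.Perm (Fin 4)) by decide, rep_eval_0]
    try simp only [r11, r22, r33, r31, r212, r323, r3213, r11e, r22e, r33e, r31e, r212e, r323e, r3213e, one_mul, mul_one]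
  · rw [show mkT (δ 0) = u1 from rfl, rep_eval_2,
      show spherePermGen 0 * (sw2) = (sw1 * sw2) by decide, rep_eval_4]
    try simp only [r11, r22, r33, r31, r212, r323, r3213, r11e, r22e, r33e, r31e, r212e, r323e, r3213e, one_mul, mul_one]
  · rw [show mkT (δ 0) = u1 from rfl, rep_eval_3,
      show spherePermGen 0 * (sw3) = (sw1 * sw3) by decide, rep_eval_5]
    try simp only [r11, r22, r33, r31, r212, r323, r3213, r11e, r22e, r33e, r31e, r212e, r323e, r3213e, one_mul, mul_one]
  · rw [show mkT (δ 0) = u1 from rfl, rep_eval_4,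
      show spherePermGen 0 * (sw1 * sw2) = (sw2) by decide, rep_eval_2]
    try simp only [r11, r22, r33, r31, r212, r323, r3213, r11e, r22e, r33e, r31e, r212e, r323e, r3213e, one_mul, mul_one]
  · rw [show mkT (δ 0) = u1 from rfl, rep_eval_5,
      show spherePermGen 0 * (sw1 * sw3) = (sw3) by decide, rep_eval_3]
    try simp only [r11, r22, r33, r31, r212, r323, r3213, r11e, r22e, r33e, r31e, r212e, r323e, r3213e, one_mul, mul_one]
  · rw [show mkT (δ 0) = u1 from rfl, rep_eval_6,
      show spherePermGen 0 * (sw2 * sw1) = (sw1 * sw2 * sw1) by decide, rep_eval_9]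
    try simp only [r11, r22, r33, r31, r212, r323, r3213, r11e, r22e, r33e, r31e, r212e, r323e, r3213e, one_mul, mul_one]
  · rw [show mkT (δ 0) = u1 from rfl, rep_eval_7,
      show spherePermGen 0 * (sw2 * sw3) = (sw1 * sw2 * sw3) by decide, rep_eval_10]
    try simp only [r11, r22, r33, r31, r212, r323, r3213, r11e, r22e, r33e, r31e, r212e, r323e, r3213e, one_mul, mul_one]
  · rw [show mkT (δ 0) = u1 from rfl, rep_eval_8,
      show spherePermGen 0 * (sw3 * sw2) = (sw1 * sw3 * sw2) by decide, rep_eval_11]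
    try simp only [r11, r22, r33, r31, r212, r323, r3213, r11e, r22e, r33e, r31e, r212e, r323e, r3213e, one_mul, mul_one]
  · rw [show mkT (δ 0) = u1 from rfl, rep_eval_9,
      show spherePermGen 0 * (sw1 * sw2 * sw1) = (sw2 * sw1) by decide, rep_eval_6]
    try simp only [r11, r22, r33, r31, r212, r323, r3213, r11e, r22e, r33e, r31e, r212e, r323e, r3213e, one_mul, mul_one]
  · rw [show mkT (δ 0) = u1 from rfl, rep_eval_10,
      show spherePermGen 0 * (sw1 * sw2 * sw3) = (sw2 * sw3) by decide, rep_eval_7]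
    try simp only [r11, r22, r33, r31, r212, r323, r3213, r11e, r22e, r33e, r31e, r212e, r323e, r3213e, one_mul, mul_one]
  · rw [show mkT (δ 0) = u1 from rfl, rep_eval_11,
      show spherePermGen 0 * (sw1 * sw3 * sw2) = (sw3 * sw2) by decide, rep_eval_8]
    try simp only [r11, r22, r33, r31, r212, r323, r3213, r11e, r22e, r33e, r31e, r212e, r323e, r3213e, one_mul, mul_one]
  · rw [show mkT (δ 0) = u1 from rfl, rep_eval_12,
      show spherePermGen 0 * (sw2 * sw1 * sw3) = (sw1 * sw2 * sw1 * sw3) by decide, rep_eval_15]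
    try simp only [r11, r22, r33, r31, r212, r323, r3213, r11e, r22e, r33e, r31e, r212e, r323e, r3213e, one_mul, mul_one]
  · rw [show mkT (δ 0) = u1 from rfl, rep_eval_13,
      show spherePermGen 0 * (sw2 * sw3 * sw2) = (sw1 * sw2 * sw3 * sw2) by decide, rep_eval_16]
    try simp only [r11, r22, r33, r31, r212, r323, r3213, r11e, r22e, r33e, r31e, r212e, r323e, r3213e, one_mul, mul_one]
  · rw [show mkT (δ 0) = u1 from rfl, rep_eval_14,
      show spherePermGen 0 * (sw3 * sw2 * sw1) = (sw1 * sw3 * sw2 * sw1) by decide, rep_eval_17]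
    try simp only [r11, r22, r33, r31, r212, r323, r3213, r11e, r22e, r33e, r31e, r212e, r323e, r3213e, one_mul, mul_one]
  · rw [show mkT (δ 0) = u1 from rfl, rep_eval_15,
      show spherePermGen 0 * (sw1 * sw2 * sw1 * sw3) = (sw2 * sw1 * sw3) by decide, rep_eval_12]
    try simp only [r11, r22, r33, r31, r212, r323, r3213, r11e, r22e, r33e, r31e, r212e, r323e, r3213e, one_mul, mul_one]
  · rw [show mkT (δ 0) = u1 from rfl, rep_eval_16,
      show spherePermGen 0 * (sw1 * sw2 * sw3 * sw2) = (sw2 * sw3 * sw2) by decide, rep_eval_13]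
    try simp only [r11, r22, r33, r31, r212, r323, r3213, r11e, r22e, r33e, r31e, r212e, r323e, r3213e, one_mul, mul_one]
  · rw [show mkT (δ 0) = u1 from rfl, rep_eval_17,
      show spherePermGen 0 * (sw1 * sw3 * sw2 * sw1) = (sw3 * sw2 * sw1) by decide, rep_eval_14]
    try simp only [r11, r22, r33, r31, r212, r323, r3213, r11e, r22e, r33e, r31e, r212e, r323e, r3213e, one_mul, mul_one]
  · rw [show mkT (δ 0) = u1 from rfl, rep_eval_18,
      show spherePermGen 0 * (sw2 * sw1 * sw3 * sw2) = (sw1 * sw2 * sw1 * sw3 * sw2) by decide, rep_eval_20]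
    try simp only [r11, r22, r33, r31, r212, r323, r3213, r11e, r22e, r33e, r31e, r212e, r323e, r3213e, one_mul, mul_one]
  · rw [show mkT (δ 0) = u1 from rfl, rep_eval_19,
      show spherePermGen 0 * (sw2 * sw3 * sw2 * sw1) = (sw1 * sw2 * sw3 * sw2 * sw1) by decide, rep_eval_21]
    try simp only [r11, r22, r33, r31, r212, r323, r3213, r11e, r22e, r33e, r31e, r212e, r323e, r3213e, one_mul, mul_one]
  · rw [show mkT (δ 0) = u1 from rfl, rep_eval_20,
      show spherePermGen 0 * (sw1 * sw2 * sw1 * sw3 * sw2) = (sw2 * sw1 * sw3 * sw2) by decide, rep_eval_18]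
    try simp only [r11, r22, r33, r31, r212, r323, r3213, r11e, r22e, r33e, r31e, r212e, r323e, r3213e, one_mul, mul_one]
  · rw [show mkT (δ 0) = u1 from rfl, rep_eval_21,
      show spherePermGen 0 * (sw1 * sw2 * sw3 * sw2 * sw1) = (sw2 * sw3 * sw2 * sw1) by decide, rep_eval_19]
    try simp only [r11, r22, r33, r31, r212, r323, r3213, r11e, r22e, r33e, r31e, r212e, r323e, r3213e, one_mul, mul_one]
  · rw [show mkT (δ 0) = u1 from rfl, rep_eval_22,
      show spherePermGen 0 * (sw2 * sw1 * sw3 * sw2 * sw1) = (sw1 * sw2 * sw1 * sw3 * sw2 * sw1) by decide, rep_eval_23]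
    try simp only [r11, r22, r33, r31, r212, r323, r3213, r11e, r22e, r33e, r31e, r212e, r323e, r3213e, one_mul, mul_one]
  · rw [show mkT (δ 0) = u1 from rfl, rep_eval_23,
      show spherePermGen 0 * (sw1 * sw2 * sw1 * sw3 * sw2 * sw1) = (sw2 * sw1 * sw3 * sw2 * sw1) by decide, rep_eval_22]
    try simp only [r11, r22, r33, r31, r212, r323, r3213, r11e, r22e, r33e, r31e, r212e, r323e, r3213e, one_mul, mul_one]
  · rw [show mkT (δ 1) = u2 from rfl, rep_eval_0,
      show spherePermGen 1 * (1 : Equiv.Perm (Fin 4)) = (sw2) by decide, rep_eval_2]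
    try simp only [r11, r22, r33, r31, r212, r323, r3213, r11e, r22e, r33e, r31e, r212e, r323e, r3213e, one_mul, mul_one]
  · rw [show mkT (δ 1) = u2 from rfl, rep_eval_1,
      show spherePermGen 1 * (sw1) = (sw2 * sw1) by decide, rep_eval_6]
    try simp only [r11, r22, r33, r31, r212, r323, r3213, r11e, r22e, r33e, r31e, r212e, r323e, r3213e, one_mul, mul_one]
  · rw [show mkT (δ 1) = u2 from rfl, rep_eval_2,
      show spherePermGen 1 * (sw2) = (1 : Equiv.Perm (Fin 4)) by decide, rep_eval_0]
    try simp only [r11, r22, r33, r31, r212, r323, r3213, r11e, r22e, r33e, r31e, r212e, r323e, r3213e, one_mul, mul_one]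
  · rw [show mkT (δ 1) = u2 from rfl, rep_eval_3,
      show spherePermGen 1 * (sw3) = (sw2 * sw3) by decide, rep_eval_7]
    try simp only [r11, r22, r33, r31, r212, r323, r3213, r11e, r22e, r33e, r31e, r212e, r323e, r3213e, one_mul, mul_one]
  · rw [show mkT (δ 1) = u2 from rfl, rep_eval_4,
      show spherePermGen 1 * (sw1 * sw2) = (sw1 * sw2 * sw1) by decide, rep_eval_9]
    try simp only [r11, r22, r33, r31, r212, r323, r3213, r11e, r22e, r33e, r31e, r212e, r323e, r3213e, one_mul, mul_one]
  · rw [show mkT (δ 1) = u2 from rfl, rep_eval_5,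
      show spherePermGen 1 * (sw1 * sw3) = (sw2 * sw1 * sw3) by decide, rep_eval_12]
    try simp only [r11, r22, r33, r31, r212, r323, r3213, r11e, r22e, r33e, r31e, r212e, r323e, r3213e, one_mul, mul_one]
  · rw [show mkT (δ 1) = u2 from rfl, rep_eval_6,
      show spherePermGen 1 * (sw2 * sw1) = (sw1) by decide, rep_eval_1]
    try simp only [r11, r22, r33, r31, r212, r323, r3213, r11e, r22e, r33e, r31e, r212e, r323e, r3213e, one_mul, mul_one]
  · rw [show mkT (δ 1) = u2 from rfl, rep_eval_7,
      show spherePermGen 1 * (sw2 * sw3) = (sw3) by decide, rep_eval_3]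
    try simp only [r11, r22, r33, r31, r212, r323, r3213, r11e, r22e, r33e, r31e, r212e, r323e, r3213e, one_mul, mul_one]
  · rw [show mkT (δ 1) = u2 from rfl, rep_eval_8,
      show spherePermGen 1 * (sw3 * sw2) = (sw2 * sw3 * sw2) by decide, rep_eval_13]
    try simp only [r11, r22, r33, r31, r212, r323, r3213, r11e, r22e, r33e, r31e, r212e, r323e, r3213e, one_mul, mul_one]
  · rw [show mkT (δ 1) = u2 from rfl, rep_eval_9,
      show spherePermGen 1 * (sw1 * sw2 * sw1) = (sw1 * sw2) by decide, rep_eval_4]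
    try simp only [r11, r22, r33, r31, r212, r323, r3213, r11e, r22e, r33e, r31e, r212e, r323e, r3213e, one_mul, mul_one]
  · rw [show mkT (δ 1) = u2 from rfl, rep_eval_10,
      show spherePermGen 1 * (sw1 * sw2 * sw3) = (sw1 * sw2 * sw1 * sw3) by decide, rep_eval_15]
    try simp only [r11, r22, r33, r31, r212, r323, r3213, r11e, r22e, r33e, r31e, r212e, r323e, r3213e, one_mul, mul_one]
  · rw [show mkT (δ 1) = u2 from rfl, rep_eval_11,
      show spherePermGen 1 * (sw1 * sw3 * sw2) = (sw2 * sw1 * sw3 * sw2) by decide, rep_eval_18]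
    try simp only [r11, r22, r33, r31, r212, r323, r3213, r11e, r22e, r33e, r31e, r212e, r323e, r3213e, one_mul, mul_one]
  · rw [show mkT (δ 1) = u2 from rfl, rep_eval_12,
      show spherePermGen 1 * (sw2 * sw1 * sw3) = (sw1 * sw3) by decide, rep_eval_5]
    try simp only [r11, r22, r33, r31, r212, r323, r3213, r11e, r22e, r33e, r31e, r212e, r323e, r3213e, one_mul, mul_one]
  · rw [show mkT (δ 1) = u2 from rfl, rep_eval_13,
      show spherePermGen 1 * (sw2 * sw3 * sw2) = (sw3 * sw2) by decide, rep_eval_8]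
    try simp only [r11, r22, r33, r31, r212, r323, r3213, r11e, r22e, r33e, r31e, r212e, r323e, r3213e, one_mul, mul_one]
  · rw [show mkT (δ 1) = u2 from rfl, rep_eval_14,
      show spherePermGen 1 * (sw3 * sw2 * sw1) = (sw2 * sw3 * sw2 * sw1) by decide, rep_eval_19]
    try simp only [r11, r22, r33, r31, r212, r323, r3213, r11e, r22e, r33e, r31e, r212e, r323e, r3213e, one_mul, mul_one]
  · rw [show mkT (δ 1) = u2 from rfl, rep_eval_15,
      show spherePermGen 1 * (sw1 * sw2 * sw1 * sw3) = (sw1 * sw2 * sw3) by decide, rep_eval_10]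
    try simp only [r11, r22, r33, r31, r212, r323, r3213, r11e, r22e, r33e, r31e, r212e, r323e, r3213e, one_mul, mul_one]
  · rw [show mkT (δ 1) = u2 from rfl, rep_eval_16,
      show spherePermGen 1 * (sw1 * sw2 * sw3 * sw2) = (sw1 * sw2 * sw1 * sw3 * sw2) by decide, rep_eval_20]
    try simp only [r11, r22, r33, r31, r212, r323, r3213, r11e, r22e, r33e, r31e, r212e, r323e, r3213e, one_mul, mul_one]
  · rw [show mkT (δ 1) = u2 from rfl, rep_eval_17,
      show spherePermGen 1 * (sw1 * sw3 * sw2 * sw1) = (sw2 * sw1 * sw3 * sw2 * sw1) by decide, rep_eval_22]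
    try simp only [r11, r22, r33, r31, r212, r323, r3213, r11e, r22e, r33e, r31e, r212e, r323e, r3213e, one_mul, mul_one]
  · rw [show mkT (δ 1) = u2 from rfl, rep_eval_18,
      show spherePermGen 1 * (sw2 * sw1 * sw3 * sw2) = (sw1 * sw3 * sw2) by decide, rep_eval_11]
    try simp only [r11, r22, r33, r31, r212, r323, r3213, r11e, r22e, r33e, r31e, r212e, r323e, r3213e, one_mul, mul_one]
  · rw [show mkT (δ 1) = u2 from rfl, rep_eval_19,
      show spherePermGen 1 * (sw2 * sw3 * sw2 * sw1) = (sw3 * sw2 * sw1) by decide, rep_eval_14]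
    try simp only [r11, r22, r33, r31, r212, r323, r3213, r11e, r22e, r33e, r31e, r212e, r323e, r3213e, one_mul, mul_one]
  · rw [show mkT (δ 1) = u2 from rfl, rep_eval_20,
      show spherePermGen 1 * (sw1 * sw2 * sw1 * sw3 * sw2) = (sw1 * sw2 * sw3 * sw2) by decide, rep_eval_16]
    try simp only [r11, r22, r33, r31, r212, r323, r3213, r11e, r22e, r33e, r31e, r212e, r323e, r3213e, one_mul, mul_one]
  · rw [show mkT (δ 1) = u2 from rfl, rep_eval_21,
      show spherePermGen 1 * (sw1 * sw2 * sw3 * sw2 * sw1) = (sw1 * sw2 * sw1 * sw3 * sw2 * sw1) by decide, rep_eval_23]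
    try simp only [r11, r22, r33, r31, r212, r323, r3213, r11e, r22e, r33e, r31e, r212e, r323e, r3213e, one_mul, mul_one]
  · rw [show mkT (δ 1) = u2 from rfl, rep_eval_22,
      show spherePermGen 1 * (sw2 * sw1 * sw3 * sw2 * sw1) = (sw1 * sw3 * sw2 * sw1) by decide, rep_eval_17]
    try simp only [r11, r22, r33, r31, r212, r323, r3213, r11e, r22e, r33e, r31e, r212e, r323e, r3213e, one_mul, mul_one]
  · rw [show mkT (δ 1) = u2 from rfl, rep_eval_23,
      show spherePermGen 1 * (sw1 * sw2 * sw1 * sw3 * sw2 * sw1) = (sw1 * sw2 * sw3 * sw2 * sw1) by decide, rep_eval_21]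
    try simp only [r11, r22, r33, r31, r212, r323, r3213, r11e, r22e, r33e, r31e, r212e, r323e, r3213e, one_mul, mul_one]
  · rw [show mkT (δ 2) = u3 from rfl, rep_eval_0,
      show spherePermGen 2 * (1 : Equiv.Perm (Fin 4)) = (sw3) by decide, rep_eval_3]
    try simp only [r11, r22, r33, r31, r212, r323, r3213, r11e, r22e, r33e, r31e, r212e, r323e, r3213e, one_mul, mul_one]
  · rw [show mkT (δ 2) = u3 from rfl, rep_eval_1,
      show spherePermGen 2 * (sw1) = (sw1 * sw3) by decide, rep_eval_5]
    try simp only [r11, r22, r33, r31, r212, r323, r3213, r11e, r22e, r33e, r31e, r212e, r323e, r3213e, one_mul, mul_one]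
  · rw [show mkT (δ 2) = u3 from rfl, rep_eval_2,
      show spherePermGen 2 * (sw2) = (sw3 * sw2) by decide, rep_eval_8]
    try simp only [r11, r22, r33, r31, r212, r323, r3213, r11e, r22e, r33e, r31e, r212e, r323e, r3213e, one_mul, mul_one]
  · rw [show mkT (δ 2) = u3 from rfl, rep_eval_3,
      show spherePermGen 2 * (sw3) = (1 : Equiv.Perm (Fin 4)) by decide, rep_eval_0]
    try simp only [r11, r22, r33, r31, r212, r323, r3213, r11e, r22e, r33e, r31e, r212e, r323e, r3213e, one_mul, mul_one]
  · rw [show mkT (δ 2) = u3 from rfl, rep_eval_4,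
      show spherePermGen 2 * (sw1 * sw2) = (sw1 * sw3 * sw2) by decide, rep_eval_11]
    try simp only [r11, r22, r33, r31, r212, r323, r3213, r11e, r22e, r33e, r31e, r212e, r323e, r3213e, one_mul, mul_one]
  · rw [show mkT (δ 2) = u3 from rfl, rep_eval_5,
      show spherePermGen 2 * (sw1 * sw3) = (sw1) by decide, rep_eval_1]
    try simp only [r11, r22, r33, r31, r212, r323, r3213, r11e, r22e, r33e, r31e, r212e, r323e, r3213e, one_mul, mul_one]
  · rw [show mkT (δ 2) = u3 from rfl, rep_eval_6,
      show spherePermGen 2 * (sw2 * sw1) = (sw3 * sw2 * sw1) by decide, rep_eval_14]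
    try simp only [r11, r22, r33, r31, r212, r323, r3213, r11e, r22e, r33e, r31e, r212e, r323e, r3213e, one_mul, mul_one]
  · rw [show mkT (δ 2) = u3 from rfl, rep_eval_7,
      show spherePermGen 2 * (sw2 * sw3) = (sw2 * sw3 * sw2) by decide, rep_eval_13]
    try simp only [r11, r22, r33, r31, r212, r323, r3213, r11e, r22e, r33e, r31e, r212e, r323e, r3213e, one_mul, mul_one]
  · rw [show mkT (δ 2) = u3 from rfl, rep_eval_8,
      show spherePermGen 2 * (sw3 * sw2) = (sw2) by decide, rep_eval_2]
    try simp only [r11, r22, r33, r31, r212, r323, r3213, r11e, r22e, r33e, r31e, r212e, r323e, r3213e, one_mul, mul_one]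
  · rw [show mkT (δ 2) = u3 from rfl, rep_eval_9,
      show spherePermGen 2 * (sw1 * sw2 * sw1) = (sw1 * sw3 * sw2 * sw1) by decide, rep_eval_17]
    try simp only [r11, r22, r33, r31, r212, r323, r3213, r11e, r22e, r33e, r31e, r212e, r323e, r3213e, one_mul, mul_one]
  · rw [show mkT (δ 2) = u3 from rfl, rep_eval_10,
      show spherePermGen 2 * (sw1 * sw2 * sw3) = (sw1 * sw2 * sw3 * sw2) by decide, rep_eval_16]
    try simp only [r11, r22, r33, r31, r212, r323, r3213, r11e, r22e, r33e, r31e, r212e, r323e, r3213e, one_mul, mul_one]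
  · rw [show mkT (δ 2) = u3 from rfl, rep_eval_11,
      show spherePermGen 2 * (sw1 * sw3 * sw2) = (sw1 * sw2) by decide, rep_eval_4]
    try simp only [r11, r22, r33, r31, r212, r323, r3213, r11e, r22e, r33e, r31e, r212e, r323e, r3213e, one_mul, mul_one]
  · rw [show mkT (δ 2) = u3 from rfl, rep_eval_12,
      show spherePermGen 2 * (sw2 * sw1 * sw3) = (sw2 * sw3 * sw2 * sw1) by decide, rep_eval_19]
    try simp only [r11, r22, r33, r31, r212, r323, r3213, r11e, r22e, r33e, r31e, r212e, r323e, r3213e, one_mul, mul_one]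
  · rw [show mkT (δ 2) = u3 from rfl, rep_eval_13,
      show spherePermGen 2 * (sw2 * sw3 * sw2) = (sw2 * sw3) by decide, rep_eval_7]
    try simp only [r11, r22, r33, r31, r212, r323, r3213, r11e, r22e, r33e, r31e, r212e, r323e, r3213e, one_mul, mul_one]
  · rw [show mkT (δ 2) = u3 from rfl, rep_eval_14,
      show spherePermGen 2 * (sw3 * sw2 * sw1) = (sw2 * sw1) by decide, rep_eval_6]
    try simp only [r11, r22, r33, r31, r212, r323, r3213, r11e, r22e, r33e, r31e, r212e, r323e, r3213e, one_mul, mul_one]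
  · rw [show mkT (δ 2) = u3 from rfl, rep_eval_15,
      show spherePermGen 2 * (sw1 * sw2 * sw1 * sw3) = (sw1 * sw2 * sw3 * sw2 * sw1) by decide, rep_eval_21]
    try simp only [r11, r22, r33, r31, r212, r323, r3213, r11e, r22e, r33e, r31e, r212e, r323e, r3213e, one_mul, mul_one]
  · rw [show mkT (δ 2) = u3 from rfl, rep_eval_16,
      show spherePermGen 2 * (sw1 * sw2 * sw3 * sw2) = (sw1 * sw2 * sw3) by decide, rep_eval_10]
    try simp only [r11, r22, r33, r31, r212, r323, r3213, r11e, r22e, r33e, r31e, r212e, r323e, r3213e, one_mul, mul_one]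
  · rw [show mkT (δ 2) = u3 from rfl, rep_eval_17,
      show spherePermGen 2 * (sw1 * sw3 * sw2 * sw1) = (sw1 * sw2 * sw1) by decide, rep_eval_9]
    try simp only [r11, r22, r33, r31, r212, r323, r3213, r11e, r22e, r33e, r31e, r212e, r323e, r3213e, one_mul, mul_one]
  · rw [show mkT (δ 2) = u3 from rfl, rep_eval_18,
      show spherePermGen 2 * (sw2 * sw1 * sw3 * sw2) = (sw2 * sw1 * sw3 * sw2 * sw1) by decide, rep_eval_22]
    try simp only [r11, r22, r33, r31, r212, r323, r3213, r11e, r22e, r33e, r31e, r212e, r323e, r3213e, one_mul, mul_one]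
  · rw [show mkT (δ 2) = u3 from rfl, rep_eval_19,
      show spherePermGen 2 * (sw2 * sw3 * sw2 * sw1) = (sw2 * sw1 * sw3) by decide, rep_eval_12]
    try simp only [r11, r22, r33, r31, r212, r323, r3213, r11e, r22e, r33e, r31e, r212e, r323e, r3213e, one_mul, mul_one]
  · rw [show mkT (δ 2) = u3 from rfl, rep_eval_20,
      show spherePermGen 2 * (sw1 * sw2 * sw1 * sw3 * sw2) = (sw1 * sw2 * sw1 * sw3 * sw2 * sw1) by decide, rep_eval_23]
    try simp only [r11, r22, r33, r31, r212, r323, r3213, r11e, r22e, r33e, r31e, r212e, r323e, r3213e, one_mul, mul_one]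
  · rw [show mkT (δ 2) = u3 from rfl, rep_eval_21,
      show spherePermGen 2 * (sw1 * sw2 * sw3 * sw2 * sw1) = (sw1 * sw2 * sw1 * sw3) by decide, rep_eval_15]
    try simp only [r11, r22, r33, r31, r212, r323, r3213, r11e, r22e, r33e, r31e, r212e, r323e, r3213e, one_mul, mul_one]
  · rw [show mkT (δ 2) = u3 from rfl, rep_eval_22,
      show spherePermGen 2 * (sw2 * sw1 * sw3 * sw2 * sw1) = (sw2 * sw1 * sw3 * sw2) by decide, rep_eval_18]
    try simp only [r11, r22, r33, r31, r212, r323, r3213, r11e, r22e, r33e, r31e, r212e, r323e, r3213e, one_mul, mul_one]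
  · rw [show mkT (δ 2) = u3 from rfl, rep_eval_23,
      show spherePermGen 2 * (sw1 * sw2 * sw1 * sw3 * sw2 * sw1) = (sw1 * sw2 * sw1 * sw3 * sw2) by decide, rep_eval_20]
    try simp only [r11, r22, r33, r31, r212, r323, r3213, r11e, r22e, r33e, r31e, r212e, r323e, r3213e, one_mul, mul_one]

def Ksub : Subgroup SphereBraidGroup4 where
  carrier := {g | ∀ σ, mkT g * rep σ = rep (πB4S2 g * σ)}
  one_mem' := by intro σ; rw [map_one, map_one, one_mul, one_mul]
  mul_mem' := by
    intro u v hu hv σ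
    rw [map_mul, map_mul, mul_assoc, hv σ, hu, ← mul_assoc]
  inv_mem' := by
    intro u hu σ
    have h := hu ((πB4S2 u)⁻¹ * σ)
    rw [← mul_assoc, mul_inv_cancel, one_mul] at h
    rw [map_inv, map_inv, ← h, ← mul_assoc, inv_mul_cancel, one_mul]

lemma ker_le_T : πB4S2.ker ≤ T := by
  intro g hg
  have hX : g ∈ Ksub := by
    refine PresentedGroup.generated_by sphereBraidRel4 Ksub (fun j => ?_) g
    intro σ
    have hp : πB4S2 (PresentedGroup.of j : SphereBraidGroup4) = spherePermGen j :=
      PresentedGroup.toGroup.of spherePermGen_rel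
    rw [hp]
    exact key j σ
  have h := hX 1
  rw [MonoidHom.mem_ker] at hg
  rw [hg, one_mul, rep_eval_0, mul_one] at h
  exact (QuotientGroup.eq_one_iff g).mp h

end SB4


namespace SB4

abbrev SL2Z := Matrix.SpecialLinearGroup (Fin 2) ℤ

def Ms : SL2Z := ⟨!![1, 1; 0, 1], by norm_num [Matrix.det_fin_two_of]⟩
def Mt : SL2Z := ⟨!![1, 0; -1, 1], by norm_num [Matrix.det_fin_two_of]⟩
def negOne : SL2Z := ⟨!![-1, 0; 0, -1], by norm_num [Matrix.det_fin_two_of]⟩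

lemma sl_rel1 : Ms * Mt * Ms = Mt * Ms * Mt := by
  ext i j
  simp only [Matrix.SpecialLinearGroup.coe_mul, Matrix.SpecialLinearGroup.coe_pow]
  fin_cases i <;> fin_cases j <;>
    simp [Ms, Mt, Matrix.SpecialLinearGroup.coe_mul, Matrix.mul_apply, Fin.sum_univ_succ]

lemma sl_rel4 : Ms * Mt * Ms * Ms * Mt * Ms = negOne := by
  ext i j
  simp only [Matrix.SpecialLinearGroup.coe_mul, Matrix.SpecialLinearGroup.coe_pow]
  fin_cases i <;> fin_cases j <;>
    simp [Ms, Mt, negOne, Matrix.SpecialLinearGroup.coe_mul, Matrix.mul_apply, Fin.sum_univ_succ]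

lemma Ms2_coe : ((Ms ^ 2 : SL2Z) : Matrix (Fin 2) (Fin 2) ℤ) = !![1, 2; 0, 1] := by
  ext i j
  simp only [Matrix.SpecialLinearGroup.coe_mul, Matrix.SpecialLinearGroup.coe_pow]
  fin_cases i <;> fin_cases j <;>
    simp [Ms, pow_two, Matrix.SpecialLinearGroup.coe_mul, Matrix.mul_apply, Fin.sum_univ_succ]

lemma Mt2_coe : ((Mt ^ 2 : SL2Z) : Matrix (Fin 2) (Fin 2) ℤ) = !![1, 0; -2, 1] := by
  ext i j
  simp only [Matrix.SpecialLinearGroup.coe_mul, Matrix.SpecialLinearGroup.coe_pow]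
  fin_cases i <;> fin_cases j <;>
    simp [Mt, pow_two, Matrix.SpecialLinearGroup.coe_mul, Matrix.mul_apply, Fin.sum_univ_succ]

lemma negOne_mem_center : negOne ∈ Subgroup.center SL2Z := by
  rw [Subgroup.mem_center_iff]
  intro g
  ext i j
  simp only [Matrix.SpecialLinearGroup.coe_mul, Matrix.SpecialLinearGroup.coe_pow]
  fin_cases i <;> fin_cases j <;>
    simp [negOne, Matrix.SpecialLinearGroup.coe_mul, Matrix.mul_apply, Fin.sum_univ_succ]

abbrev PSL := SL2Z ⧸ Subgroup.center SL2Z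

open Pointwise

def mkP : SL2Z →* PSL := QuotientGroup.mk' (Subgroup.center SL2Z)

lemma mkP_negOne : mkP negOne = 1 := (QuotientGroup.eq_one_iff _).mpr negOne_mem_center

lemma phi_rels : ∀ r ∈ sphereBraidRel4,
    FreeGroup.lift ![mkP Ms, mkP Mt, mkP Ms] r = 1 := by
  intro r hr
  rcases hr with rfl | rfl | rfl | rfl <;>
    simp only [map_mul, map_inv, FreeGroup.lift_apply_of, Matrix.cons_val_zero, Matrix.cons_val_one,
      Matrix.head_cons, Matrix.cons_val_two, Matrix.tail_cons]
  · rw [← map_mul, ← map_mul, ← map_mul, ← map_mul, ← map_inv, ← map_mul, sl_rel1]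
    rw [mul_inv_cancel, map_one]
  · rw [← map_mul, ← map_mul, ← map_mul, ← map_mul, ← map_inv, ← map_mul, sl_rel1]
    rw [mul_inv_cancel, map_one]
  · group
  · rw [← map_mul, ← map_mul, ← map_mul, ← map_mul, ← map_mul, sl_rel4]
    exact mkP_negOne

def Φ : SphereBraidGroup4 →* PSL := PresentedGroup.toGroup phi_rels

lemma Φx : Φ x = mkP Ms := PresentedGroup.toGroup.of phi_rels
lemma Φy : Φ y = mkP Mt := PresentedGroup.toGroup.of phi_rels
lemma Φz : Φ z = mkP Ms := PresentedGroup.toGroup.of phi_rels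

/-! ### the action of `SL2Z` on `ℤ²` and the ping-pong argument -/

set_option synthInstance.maxHeartbeats 400000

instance slSMul : SMul SL2Z (Fin 2 → ℤ) := ⟨fun g v => (g : Matrix (Fin 2) (Fin 2) ℤ).mulVec v⟩

instance slAction : MulAction SL2Z (Fin 2 → ℤ) where
  one_smul v := by
    show ((1 : SL2Z) : Matrix (Fin 2) (Fin 2) ℤ).mulVec v = v
    simp
  mul_smul g h v := by
    show ((g * h : SL2Z) : Matrix (Fin 2) (Fin 2) ℤ).mulVec v
      = (g : Matrix (Fin 2) (Fin 2) ℤ).mulVec ((h : Matrix (Fin 2) (Fin 2) ℤ).mulVec v)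
    rw [Matrix.SpecialLinearGroup.coe_mul, ← Matrix.mulVec_mulVec]

lemma smul_def (g : SL2Z) (v : Fin 2 → ℤ) :
    g • v = (g : Matrix (Fin 2) (Fin 2) ℤ).mulVec v := rfl

lemma Ms2_eq : (Ms ^ 2 : SL2Z) = ⟨!![1, 2; 0, 1], by norm_num [Matrix.det_fin_two_of]⟩ :=
  Subtype.ext Ms2_coe

lemma Mt2_eq : (Mt ^ 2 : SL2Z) = ⟨!![1, 0; -2, 1], by norm_num [Matrix.det_fin_two_of]⟩ :=
  Subtype.ext Mt2_coe

lemma Ms2_inv_coe : (((Ms ^ 2)⁻¹ : SL2Z) : Matrix (Fin 2) (Fin 2) ℤ) = !![1, -2; 0, 1] := by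
  have h : (Ms ^ 2) * ⟨!![1, -2; 0, 1], by norm_num [Matrix.det_fin_two_of]⟩ = (1 : SL2Z) := by
    rw [Ms2_eq]
    ext i j
    change (((!![1, 2; 0, 1] : Matrix (Fin 2) (Fin 2) ℤ) * !![1, -2; 0, 1] : Matrix (Fin 2) (Fin 2) ℤ)) i j = ((1 : SL2Z) : Matrix (Fin 2) (Fin 2) ℤ) i j
    fin_cases i <;> fin_cases j <;>
      simp [Matrix.SpecialLinearGroup.coe_mul, Matrix.mul_apply, Fin.sum_univ_succ]
  rw [inv_eq_of_mul_eq_one_right h]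

lemma Mt2_inv_coe : (((Mt ^ 2)⁻¹ : SL2Z) : Matrix (Fin 2) (Fin 2) ℤ) = !![1, 0; 2, 1] := by
  have h : (Mt ^ 2) * ⟨!![1, 0; 2, 1], by norm_num [Matrix.det_fin_two_of]⟩ = (1 : SL2Z) := by
    rw [Mt2_eq]
    ext i j
    change (((!![1, 0; -2, 1] : Matrix (Fin 2) (Fin 2) ℤ) * !![1, 0; 2, 1] : Matrix (Fin 2) (Fin 2) ℤ)) i j = ((1 : SL2Z) : Matrix (Fin 2) (Fin 2) ℤ) i j
    fin_cases i <;> fin_cases j <;>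
      simp [Matrix.SpecialLinearGroup.coe_mul, Matrix.mul_apply, Fin.sum_univ_succ]
  rw [inv_eq_of_mul_eq_one_right h]

lemma Ms2_zpow_coe (n : ℤ) :
    (((Ms ^ 2) ^ n : SL2Z) : Matrix (Fin 2) (Fin 2) ℤ) = !![1, 2 * n; 0, 1] := by
  induction n using Int.induction_on with
  | zero => ext i j; fin_cases i <;> fin_cases j <;> simp
  | succ k ih =>
      rw [zpow_add_one, Matrix.SpecialLinearGroup.coe_mul, ih, Ms2_coe]
      ext i j
      fin_cases i <;> fin_cases j <;>
        simp [Matrix.mul_apply, Fin.sum_univ_succ] <;> ring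
  | pred k ih =>
      rw [zpow_sub_one, Matrix.SpecialLinearGroup.coe_mul, ih, Ms2_inv_coe]
      ext i j
      fin_cases i <;> fin_cases j <;>
        simp [Matrix.mul_apply, Fin.sum_univ_succ] <;> ring

lemma Mt2_zpow_coe (n : ℤ) :
    (((Mt ^ 2) ^ n : SL2Z) : Matrix (Fin 2) (Fin 2) ℤ) = !![1, 0; -2 * n, 1] := by
  induction n using Int.induction_on with
  | zero => ext i j; fin_cases i <;> fin_cases j <;> simp
  | succ k ih =>
      rw [zpow_add_one, Matrix.SpecialLinearGroup.coe_mul, ih, Mt2_coe]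
      ext i j
      fin_cases i <;> fin_cases j <;>
        simp [Matrix.mul_apply, Fin.sum_univ_succ] <;> ring
  | pred k ih =>
      rw [zpow_sub_one, Matrix.SpecialLinearGroup.coe_mul, ih, Mt2_inv_coe]
      ext i j
      fin_cases i <;> fin_cases j <;>
        simp [Matrix.mul_apply, Fin.sum_univ_succ] <;> ring

def XX : Fin 2 → Set (Fin 2 → ℤ) :=
  ![{v | |v 1| < |v 0|}, {v | |v 0| < |v 1|}]

lemma ping_s {n : ℤ} (hn : n ≠ 0) : ((Ms ^ 2) ^ n : SL2Z) • XX 1 ⊆ XX 0 := by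
  rintro w ⟨v, hv, rfl⟩
  have hv' : |v 0| < |v 1| := hv
  show |((((Ms ^ 2) ^ n : SL2Z) : Matrix (Fin 2) (Fin 2) ℤ).mulVec v) 1|
      < |((((Ms ^ 2) ^ n : SL2Z) : Matrix (Fin 2) (Fin 2) ℤ).mulVec v) 0|
  rw [Ms2_zpow_coe]
  have h0 : (!![1, 2 * n; 0, 1].mulVec v) 0 = v 0 + 2 * n * v 1 := by
    simp [Matrix.mulVec, dotProduct, Fin.sum_univ_succ]
  have h1 : (!![1, 2 * n; 0, 1].mulVec v) 1 = v 1 := by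
    simp [Matrix.mulVec, dotProduct, Fin.sum_univ_succ]
  rw [h0, h1]
  have hn1 : 1 ≤ |n| := Int.one_le_abs hn
  have k1 : |2 * n * v 1| = 2 * |n| * |v 1| := by
    rw [abs_mul, abs_mul, abs_two]
  have k3 : |2 * n * v 1| - |v 0| ≤ |v 0 + 2 * n * v 1| := by
    calc |2 * n * v 1| - |v 0| = |2 * n * v 1| - |-(v 0)| := by rw [abs_neg]
    _ ≤ |2 * n * v 1 - -(v 0)| := abs_sub_abs_le_abs_sub _ _
    _ = |v 0 + 2 * n * v 1| := by congr 1; ring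
  nlinarith [abs_nonneg (v 1), abs_nonneg (v 0)]

lemma ping_t {n : ℤ} (hn : n ≠ 0) : ((Mt ^ 2) ^ n : SL2Z) • XX 0 ⊆ XX 1 := by
  rintro w ⟨v, hv, rfl⟩
  have hv' : |v 1| < |v 0| := hv
  show |((((Mt ^ 2) ^ n : SL2Z) : Matrix (Fin 2) (Fin 2) ℤ).mulVec v) 0|
      < |((((Mt ^ 2) ^ n : SL2Z) : Matrix (Fin 2) (Fin 2) ℤ).mulVec v) 1|
  rw [Mt2_zpow_coe]
  have h0 : (!![1, 0; -2 * n, 1].mulVec v) 0 = v 0 := by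
    simp [Matrix.mulVec, dotProduct, Fin.sum_univ_succ]
  have h1 : (!![1, 0; -2 * n, 1].mulVec v) 1 = -2 * n * v 0 + v 1 := by
    simp [Matrix.mulVec, dotProduct, Fin.sum_univ_succ]
  rw [h0, h1]
  have hn1 : 1 ≤ |n| := Int.one_le_abs hn
  have k1 : |(-2) * n * v 0| = 2 * |n| * |v 0| := by
    rw [abs_mul, abs_mul]
    norm_num
  have k3 : |(-2) * n * v 0| - |v 1| ≤ |(-2) * n * v 0 + v 1| := by
    calc |(-2) * n * v 0| - |v 1| = |(-2) * n * v 0| - |-(v 1)| := by rw [abs_neg]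
    _ ≤ |(-2) * n * v 0 - -(v 1)| := abs_sub_abs_le_abs_sub _ _
    _ = |(-2) * n * v 0 + v 1| := by congr 1; ring
  have e : -2 * n * v 0 + v 1 = (-2) * n * v 0 + v 1 := by ring
  rw [e]
  nlinarith [abs_nonneg (v 1), abs_nonneg (v 0)]

open Monoid in
lemma sanov_inj :
    Function.Injective (FreeGroup.lift ![(Ms ^ 2 : SL2Z), Mt ^ 2]) := by
  classical
  set A : Fin 2 → SL2Z := ![(Ms ^ 2 : SL2Z), Mt ^ 2] with hA
  have heq : (FreeGroup.lift A : FreeGroup (Fin 2) →* SL2Z) =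
      (CoprodI.lift fun i : Fin 2 => FreeGroup.lift fun _ : Unit => A i).comp
        (@freeGroupEquivCoprodI (Fin 2)).toMonoidHom := by
    ext i
    simp
  rw [heq, MonoidHom.coe_comp]
  refine Function.Injective.comp ?_ (MulEquiv.injective freeGroupEquivCoprodI)
  refine CoprodI.lift_injective_of_ping_pong _ ?_ XX ?_ ?_ ?_
  · right
    exact ⟨0, by
      rw [FreeGroup.freeGroupUnitEquivInt.cardinal_eq, Cardinal.mk_denumerable]
      exact le_of_lt (Cardinal.nat_lt_aleph0 3)⟩
  · intro i
    fin_cases i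
    · exact ⟨![1, 0], by show |(![1,0] : Fin 2 → ℤ) 1| < |(![1,0] : Fin 2 → ℤ) 0|; norm_num⟩
    · exact ⟨![0, 1], by show |(![0,1] : Fin 2 → ℤ) 0| < |(![0,1] : Fin 2 → ℤ) 1|; norm_num⟩
  · intro i j hij
    simp only [Function.onFun]
    fin_cases i <;> fin_cases j <;> first
      | exact absurd rfl hij
      | (rw [Set.disjoint_left]
         intro v hv1 hv2
         have h1 : |v 1| < |v 0| := hv1
         have h2 : |v 0| < |v 1| := hv2
         omega)
      | (rw [Set.disjoint_left]
         intro v hv1 hv2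
         have h1 : |v 0| < |v 1| := hv1
         have h2 : |v 1| < |v 0| := hv2
         omega)
  · intro i j hij
    refine FreeGroup.freeGroupUnitEquivInt.forall_congr_left.mpr ?_
    intro n hne1
    change FreeGroup.lift (fun _ => A i) (FreeGroup.of () ^ n) • XX j ⊆ XX i
    simp only [map_zpow, FreeGroup.lift_apply_of]
    change A i ^ n • XX j ⊆ XX i
    have hnne0 : n ≠ 0 := by
      rintro rfl
      apply hne1
      simp [FreeGroup.freeGroupUnitEquivInt]
    fin_cases i <;> fin_cases j
    · exact absurd rfl hij
    · exact ping_s hnne0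
    · exact ping_t hnne0
    · exact absurd rfl hij

/-! ### the centralizer computation -/

lemma comm_st {g : SL2Z} (h1 : g * Ms ^ 2 = Ms ^ 2 * g) (h2 : g * Mt ^ 2 = Mt ^ 2 * g) :
    g = 1 ∨ g = negOne := by
  have hm1 := congrArg (Subtype.val) h1
  have hm2 := congrArg (Subtype.val) h2
  rw [Matrix.SpecialLinearGroup.coe_mul, Matrix.SpecialLinearGroup.coe_mul, Ms2_coe] at hm1
  rw [Matrix.SpecialLinearGroup.coe_mul, Matrix.SpecialLinearGroup.coe_mul, Mt2_coe] at hm2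
  have e00 := congrFun (congrFun hm1 0) 0
  have e01 := congrFun (congrFun hm1 0) 1
  have f00 := congrFun (congrFun hm2 0) 0
  have f01 := congrFun (congrFun hm2 0) 1
  simp [Matrix.mul_apply, Fin.sum_univ_succ] at e00 e01 f00 f01
  -- e00 : g00 = g00 + 2 g10  (from s side: (g*s)00 = g00 ; (s*g)00 = g00 + 2 g10)
  have hdet := g.2
  rw [Matrix.det_fin_two] at hdet
  have h10 : g.1 1 0 = 0 := by omega
  have h01 : g.1 0 1 = 0 := by omega
  have hd : g.1 0 0 = g.1 1 1 := by omega
  have hsq : g.1 0 0 * g.1 0 0 = 1 := by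
    rw [← hd, h01, h10] at hdet
    simpa using hdet
  rcases mul_self_eq_one_iff.mp hsq with h | h
  · left
    ext i j
    fin_cases i <;> fin_cases j <;>
      simp [h, h01, h10, ← hd, h]
  · right
    ext i j
    fin_cases i <;> fin_cases j <;>
      simp [negOne, h, h01, h10, ← hd, h]

lemma center_desc {c : SL2Z} (hc : c ∈ Subgroup.center SL2Z) : c = 1 ∨ c = negOne :=
  comm_st ((Subgroup.mem_center_iff.mp hc) _).symm ((Subgroup.mem_center_iff.mp hc) _).symm

/-- if the images in `PSL` commute and the trace of `v` is nonzero then the matrices commute -/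
lemma comm_of_mkP_comm {u v : SL2Z} (hc : mkP u * mkP v = mkP v * mkP u)
    (htr : Matrix.trace (v : Matrix (Fin 2) (Fin 2) ℤ) ≠ 0) : u * v = v * u := by
  have h : mkP (u * v * u⁻¹) = mkP v := by
    rw [map_mul, map_mul, map_inv, hc]
    group
  obtain ⟨c, hcmem, hcz⟩ := (QuotientGroup.mk'_eq_mk' (N := Subgroup.center SL2Z)).mp h
  rcases center_desc hcmem with rfl | rfl
  · rw [mul_one] at hcz
    calc u * v = u * v * u⁻¹ * u := by group
    _ = v * u := by rw [hcz]
  · exfalso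
    have htr2 : Matrix.trace ((u * v * u⁻¹ * negOne : SL2Z) : Matrix (Fin 2) (Fin 2) ℤ)
        = Matrix.trace ((v : SL2Z) : Matrix (Fin 2) (Fin 2) ℤ) := by rw [hcz]
    rw [Matrix.SpecialLinearGroup.coe_mul] at htr2
    have hneg : ((negOne : SL2Z) : Matrix (Fin 2) (Fin 2) ℤ) = -1 := by
      ext i j
      fin_cases i <;> fin_cases j <;> simp [negOne]
    rw [hneg, Matrix.mul_neg, Matrix.mul_one, Matrix.trace_neg] at htr2
    have htr3 : Matrix.trace ((u * v * u⁻¹ : SL2Z) : Matrix (Fin 2) (Fin 2) ℤ)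
        = Matrix.trace ((v : SL2Z) : Matrix (Fin 2) (Fin 2) ℤ) := by
      rw [Matrix.SpecialLinearGroup.coe_mul, Matrix.SpecialLinearGroup.coe_mul]
      rw [Matrix.trace_mul_cycle]
      rw [← Matrix.SpecialLinearGroup.coe_mul]
      rw [show (u⁻¹ * u : SL2Z) = 1 by group]
      simp
    rw [htr3] at htr2
    have hz : Matrix.trace ((v : SL2Z) : Matrix (Fin 2) (Fin 2) ℤ) = 0 := by omega
    exact htr hz
    
end SB4


namespace SB4

/-! ### mod 4 argument : `negOne` is not in the image of the Sanov subgroup -/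

def c4 : ℤ →+* ZMod 4 := Int.castRingHom _

def m4 (g : SL2Z) : Matrix (Fin 2) (Fin 2) (ZMod 4) := (g : Matrix (Fin 2) (Fin 2) ℤ).map c4

lemma m4_mul (g h : SL2Z) : m4 (g * h) = m4 g * m4 h := by
  rw [m4, m4, m4, Matrix.SpecialLinearGroup.coe_mul, Matrix.map_mul]

def AM : Matrix (Fin 2) (Fin 2) (ZMod 4) := !![1, 2; 0, 1]
def BM : Matrix (Fin 2) (Fin 2) (ZMod 4) := !![1, 0; 2, 1]
def ABM : Matrix (Fin 2) (Fin 2) (ZMod 4) := !![1, 2; 2, 1]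

def Pm (m : Matrix (Fin 2) (Fin 2) (ZMod 4)) : Prop :=
  m = 1 ∨ m = AM ∨ m = BM ∨ m = ABM

lemma matz_ext {m m' : Matrix (Fin 2) (Fin 2) (ZMod 4)}
    (h : ∀ i j, m i j = m' i j) : m = m' := Matrix.ext h

lemma Pm_mul {m1 m2 : Matrix (Fin 2) (Fin 2) (ZMod 4)} (h1 : Pm m1) (h2 : Pm m2) :
    Pm (m1 * m2) := by
  rcases h1 with rfl | rfl | rfl | rfl <;> rcases h2 with rfl | rfl | rfl | rfl <;>
    first
      | (left; ext i j; fin_cases i <;> fin_cases j <;> decide)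
      | (right; left; ext i j; fin_cases i <;> fin_cases j <;> decide)
      | (right; right; left; ext i j; fin_cases i <;> fin_cases j <;> decide)
      | (right; right; right; ext i j; fin_cases i <;> fin_cases j <;> decide)

def Lsl : FreeGroup (Fin 2) →* SL2Z := FreeGroup.lift ![(Ms ^ 2 : SL2Z), Mt ^ 2]

lemma Pm_Lsl : ∀ w : FreeGroup (Fin 2), Pm (m4 (Lsl w)) := by
  intro w
  induction w using FreeGroup.induction_on with
  | C1 =>
      left
      rw [map_one, m4]
      show ((1 : SL2Z) : Matrix (Fin 2) (Fin 2) ℤ).map c4 = 1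
      simp
  | of i =>
      fin_cases i
      · right; left
        show m4 (Lsl (FreeGroup.of (0 : Fin 2))) = AM
        rw [show Lsl (FreeGroup.of 0) = Ms ^ 2 from FreeGroup.lift_apply_of, m4, Ms2_coe]
        ext i j
        fin_cases i <;> fin_cases j <;> decide
      · right; right; left
        show m4 (Lsl (FreeGroup.of (1 : Fin 2))) = BM
        rw [show Lsl (FreeGroup.of 1) = Mt ^ 2 from FreeGroup.lift_apply_of, m4, Mt2_coe]
        ext i j
        fin_cases i <;> fin_cases j <;> decide
  | inv_of i _ =>
      fin_cases i
      · right; left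
        show m4 (Lsl (FreeGroup.of (0 : Fin 2))⁻¹) = AM
        rw [map_inv, show Lsl (FreeGroup.of 0) = Ms ^ 2 from FreeGroup.lift_apply_of, m4, Ms2_inv_coe]
        ext i j
        fin_cases i <;> fin_cases j <;> decide
      · right; right; left
        show m4 (Lsl (FreeGroup.of (1 : Fin 2))⁻¹) = BM
        rw [map_inv, show Lsl (FreeGroup.of 1) = Mt ^ 2 from FreeGroup.lift_apply_of, m4, Mt2_inv_coe]
        ext i j
        fin_cases i <;> fin_cases j <;> decide
  | mul w1 w2 ih1 ih2 =>
      rw [map_mul, m4_mul]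
      exact Pm_mul ih1 ih2

lemma Lsl_ne_negOne (w : FreeGroup (Fin 2)) : Lsl w ≠ negOne := by
  intro h
  have hp := Pm_Lsl w
  rw [h] at hp
  have hval : ∀ i j, m4 negOne i j = (!![3, 0; 0, 3] : Matrix (Fin 2) (Fin 2) (ZMod 4)) i j := by
    intro i j
    fin_cases i <;> fin_cases j <;> simp [m4, negOne, c4] <;> decide
  have hm : m4 negOne = !![3, 0; 0, 3] := Matrix.ext hval
  rw [hm] at hp
  rcases hp with h' | h' | h' | h' <;>
  · have h00 := congrFun (congrFun h' 0) 0
    simp [AM, BM, ABM] at h00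
    revert h00
    decide

/-! ### assembling everything -/

def L : FreeGroup (Fin 2) →* SphereBraidGroup4 := FreeGroup.lift ![a, b]

lemma Ccomm : ∀ g : SphereBraidGroup4, C * g = g * C := by
  have hmem : ∀ g : SphereBraidGroup4, g ∈ Subgroup.centralizer {C} := by
    intro g
    refine PresentedGroup.generated_by sphereBraidRel4 _ (fun j => ?_) g
    rw [Subgroup.mem_centralizer_iff]
    rintro h rfl
    fin_cases j
    · exact hCx
    · exact hCy
    · exact hCz
  intro g
  have := Subgroup.mem_centralizer_iff.mp (hmem g) C rfl
  exact this

lemma Czpow_comm (k : ℤ) (g : SphereBraidGroup4) : C ^ k * g = g * C ^ k :=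
  ((Commute.zpow_left (Ccomm g) k)).eq

lemma T_rep : ∀ t ∈ T, ∃ (w : FreeGroup (Fin 2)) (k : ℤ), t = L w * C ^ k := by
  intro t ht
  refine Subgroup.closure_induction
    (p := fun t _ => ∃ (w : FreeGroup (Fin 2)) (k : ℤ), t = L w * C ^ k) ?_ ?_ ?_ ?_ ht
  · rintro s (rfl | rfl | rfl)
    · exact ⟨FreeGroup.of 0, 0, by simp [L, FreeGroup.lift_apply_of]⟩
    · exact ⟨FreeGroup.of 1, 0, by simp [L, FreeGroup.lift_apply_of]⟩
    · exact ⟨1, 1, by simp⟩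
  · exact ⟨1, 0, by simp⟩
  · rintro s u hs hu ⟨w1, k1, rfl⟩ ⟨w2, k2, rfl⟩
    refine ⟨w1 * w2, k1 + k2, ?_⟩
    rw [map_mul]
    calc L w1 * C ^ k1 * (L w2 * C ^ k2) = L w1 * (C ^ k1 * L w2) * C ^ k2 := by group
    _ = L w1 * (L w2 * C ^ k1) * C ^ k2 := by rw [Czpow_comm]
    _ = L w1 * L w2 * C ^ (k1 + k2) := by rw [zpow_add]; group
  · rintro s hs ⟨w1, k1, rfl⟩
    refine ⟨w1⁻¹, -k1, ?_⟩
    rw [map_inv, mul_inv_rev]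
    calc (C ^ k1)⁻¹ * (L w1)⁻¹ = C ^ (-k1) * (L w1)⁻¹ := by rw [zpow_neg]
    _ = (L w1)⁻¹ * C ^ (-k1) := Czpow_comm _ _

lemma a_mem_ker : a ∈ πB4S2.ker := by
  have h := δ0_sq_mem_ker
  rwa [pow_two] at h

lemma b_mem_ker : b ∈ πB4S2.ker := by
  have h := δ1_sq_mem_ker
  rwa [pow_two] at h

lemma C_mem_ker : C ∈ πB4S2.ker := by
  rw [MonoidHom.mem_ker]
  show πB4S2 (x * x * y * x * x * y) = 1
  have hx : πB4S2 x = spherePermGen 0 := PresentedGroup.toGroup.of spherePermGen_rel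
  have hy : πB4S2 y = spherePermGen 1 := PresentedGroup.toGroup.of spherePermGen_rel
  simp only [map_mul, hx, hy]
  decide

/-- the lift into the kernel subgroup -/
def LK : FreeGroup (Fin 2) →* πB4S2.ker :=
  FreeGroup.lift ![⟨a, a_mem_ker⟩, ⟨b, b_mem_ker⟩]

lemma LK_val (w : FreeGroup (Fin 2)) : (LK w : SphereBraidGroup4) = L w := by
  have : (πB4S2.ker.subtype).comp LK = L := by
    apply FreeGroup.ext_hom
    intro i
    fin_cases i <;>
      simp [LK, L, FreeGroup.lift_apply_of]
  calc (LK w : SphereBraidGroup4) = ((πB4S2.ker.subtype).comp LK) w := rfl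
  _ = L w := by rw [this]

def CK : πB4S2.ker := ⟨C, C_mem_ker⟩

lemma CK_central (k : ℤ) : CK ^ k ∈ Subgroup.center πB4S2.ker := by
  rw [Subgroup.mem_center_iff]
  intro g
  ext
  show (g : SphereBraidGroup4) * (CK ^ k : πB4S2.ker) = ((CK ^ k : πB4S2.ker) : SphereBraidGroup4) * g
  have hval : ((CK ^ k : πB4S2.ker) : SphereBraidGroup4) = C ^ k := by
    rw [SubgroupClass.coe_zpow]
    rfl
  rw [hval, ← Czpow_comm]

lemma mk_LK (w : FreeGroup (Fin 2)) :
    QuotientGroup.mk (s := Subgroup.center πB4S2.ker) (LK w) = FreeGroup.lift ![e₁, e₂] w := by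
  have : (QuotientGroup.mk' (Subgroup.center πB4S2.ker)).comp LK = FreeGroup.lift ![e₁, e₂] := by
    apply FreeGroup.ext_hom
    intro i
    fin_cases i
    · show QuotientGroup.mk (LK (FreeGroup.of 0)) = e₁
      have h : LK (FreeGroup.of 0) = ⟨a, a_mem_ker⟩ := FreeGroup.lift_apply_of
      rw [h]
      show _ = QuotientGroup.mk (⟨(δ 0) ^ 2, δ0_sq_mem_ker⟩ : πB4S2.ker)
      congr 1
    · show QuotientGroup.mk (LK (FreeGroup.of 1)) = e₂
      have h : LK (FreeGroup.of 1) = ⟨b, b_mem_ker⟩ := FreeGroup.lift_apply_of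
      rw [h]
      show _ = QuotientGroup.mk (⟨(δ 1) ^ 2, δ1_sq_mem_ker⟩ : πB4S2.ker)
      congr 1
  calc QuotientGroup.mk (LK w)
      = ((QuotientGroup.mk' (Subgroup.center πB4S2.ker)).comp LK) w := rfl
  _ = FreeGroup.lift ![e₁, e₂] w := by rw [this]

lemma Phi_L (w : FreeGroup (Fin 2)) : Φ (L w) = mkP (Lsl w) := by
  have : Φ.comp L = mkP.comp Lsl := by
    apply FreeGroup.ext_hom
    intro i
    fin_cases i
    · show Φ (L (FreeGroup.of 0)) = mkP (Lsl (FreeGroup.of 0))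
      rw [show L (FreeGroup.of 0) = a from FreeGroup.lift_apply_of,
        show Lsl (FreeGroup.of 0) = Ms ^ 2 from FreeGroup.lift_apply_of]
      show Φ (x * x) = mkP (Ms ^ 2)
      rw [map_mul, Φx, ← map_mul, pow_two]
    · show Φ (L (FreeGroup.of 1)) = mkP (Lsl (FreeGroup.of 1))
      rw [show L (FreeGroup.of 1) = b from FreeGroup.lift_apply_of,
        show Lsl (FreeGroup.of 1) = Mt ^ 2 from FreeGroup.lift_apply_of]
      show Φ (y * y) = mkP (Mt ^ 2)
      rw [map_mul, Φy, ← map_mul, pow_two]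
  calc Φ (L w) = (Φ.comp L) w := rfl
  _ = mkP (Lsl w) := by rw [this]; rfl

lemma trace_Ms2 : Matrix.trace ((Ms ^ 2 : SL2Z) : Matrix (Fin 2) (Fin 2) ℤ) ≠ 0 := by
  rw [Ms2_coe]
  simp [Matrix.trace_fin_two]

lemma trace_Mt2 : Matrix.trace ((Mt ^ 2 : SL2Z) : Matrix (Fin 2) (Fin 2) ℤ) ≠ 0 := by
  rw [Mt2_coe]
  simp [Matrix.trace_fin_two]

end SB4

namespace SB4

lemma PhiA : Φ a = mkP (Ms ^ 2) := by
  show Φ (x * x) = mkP (Ms ^ 2)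
  rw [map_mul, Φx, ← map_mul, pow_two]

lemma PhiB : Φ b = mkP (Mt ^ 2) := by
  show Φ (y * y) = mkP (Mt ^ 2)
  rw [map_mul, Φy, ← map_mul, pow_two]

end SB4

open SB4

/-- `P₄(S²)` modulo its center is a free group of rank 2, freely generated by the
classes of `δ₁²` and `δ₂²`. -/
theorem pureSphereBraidGroup4_mod_center_free :
    Function.Bijective
      (FreeGroup.lift ![e₁, e₂] :
        FreeGroup (Fin 2) →* πB4S2.ker ⧸ Subgroup.center πB4S2.ker) := by
  constructor
  · apply (injective_iff_map_eq_one (FreeGroup.lift ![e₁, e₂])).mpr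
    intro w hw
    have hcen : LK w ∈ Subgroup.center πB4S2.ker := by
      have hmk := mk_LK w
      rw [← hmk] at hw
      exact (QuotientGroup.eq_one_iff _).mp hw
    have hca := Subgroup.mem_center_iff.mp hcen ⟨a, a_mem_ker⟩
    have hcb := Subgroup.mem_center_iff.mp hcen ⟨b, b_mem_ker⟩
    have hca' : a * L w = L w * a := by
      have hv := congrArg Subtype.val hca
      simpa [LK_val] using hv
    have hcb' : b * L w = L w * b := by
      have hv := congrArg Subtype.val hcb
      simpa [LK_val] using hv
    have hA : mkP (Lsl w) * mkP (Ms ^ 2) = mkP (Ms ^ 2) * mkP (Lsl w) := by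
      have h := congrArg Φ hca'
      rw [map_mul, map_mul, Phi_L, PhiA] at h
      exact h.symm
    have hB : mkP (Lsl w) * mkP (Mt ^ 2) = mkP (Mt ^ 2) * mkP (Lsl w) := by
      have h := congrArg Φ hcb'
      rw [map_mul, map_mul, Phi_L, PhiB] at h
      exact h.symm
    have comm1 : Lsl w * Ms ^ 2 = Ms ^ 2 * Lsl w := comm_of_mkP_comm hA trace_Ms2
    have comm2 : Lsl w * Mt ^ 2 = Mt ^ 2 * Lsl w := comm_of_mkP_comm hB trace_Mt2
    rcases comm_st comm1 comm2 with h1 | h1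
    · have : Lsl w = Lsl 1 := by rw [h1, map_one]
      exact sanov_inj this
    · exact absurd h1 (Lsl_ne_negOne w)
  · intro q
    obtain ⟨u, rfl⟩ := QuotientGroup.mk_surjective q
    have hu : (u : SphereBraidGroup4) ∈ T := ker_le_T u.2
    obtain ⟨w, k, hwk⟩ := T_rep _ hu
    refine ⟨w, ?_⟩
    have hueq : u = LK w * CK ^ k := by
      ext
      rw [hwk]
      show _ = ((LK w * CK ^ k : πB4S2.ker) : SphereBraidGroup4)
      rw [Subgroup.coe_mul, LK_val, SubgroupClass.coe_zpow]
      rfl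
    rw [hueq]
    have h2 : QuotientGroup.mk (s := Subgroup.center πB4S2.ker) (CK ^ k) = 1 :=
      (QuotientGroup.eq_one_iff _).mpr (CK_central k)
    calc FreeGroup.lift ![e₁, e₂] w
        = QuotientGroup.mk (LK w) := (mk_LK w).symm
    _ = QuotientGroup.mk (LK w) * QuotientGroup.mk (s := Subgroup.center πB4S2.ker) (CK ^ k) := by
        rw [h2, mul_one]
    _ = QuotientGroup.mk (LK w * CK ^ k) := rfl
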